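/- arXiv:1204.4298 — 8 statements merged into one kernel-verified Lean document; each statement's English description precedes it below -/
import Mathlib

section
/- If G is a connected graph, then rc(G) ≤ 2χ(Ḡ) − 1, where Ḡ is the complement of G and χ(Ḡ) is its chromatic number. -/
open SimpleGraph

/-- A coloring `c` of the (potential) edges of `G` with `k` colors makes `G`
rainbow connected if any two vertices are joined by a path whose edges
receive pairwise distinct colors. -/
def RainbowConnectedWith {V : Type*} (G : SimpleGraph V) {k : ℕ}
    (c : Sym2 V → Fin k) : Prop :=
  ∀ u v : V, ∃ p : G.Walk u v, p.IsPath ∧ (p.edges.map c).Nodup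

/-- The rainbow connection number: the least number of colors making `G`
rainbow connected. -/
noncomputable def rc {V : Type*} (G : SimpleGraph V) : ℕ :=
  sInf {k | ∃ c : Sym2 V → Fin k, RainbowConnectedWith G c}

/-- The independence number: the largest cardinality of a set of pairwise
non-adjacent vertices. -/
noncomputable def indepNum {V : Type*} (G : SimpleGraph V) : ℕ :=
  sSup {n | ∃ s : Finset V, s.card = n ∧ (↑s : Set V).Pairwise fun a b => ¬ G.Adj a b}

lemma exists_noncut {W : Type*} [Fintype W] [DecidableEq W] (H : SimpleGraph W) (hH : H.Connected) :
    ∃ x : W, ∀ y z : W, y ≠ x → z ≠ x → ∃ p : H.Walk y z, x ∉ p.support := by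
  obtain ⟨r⟩ := hH.nonempty
  obtain ⟨x, -, hx⟩ := Finset.exists_max_image Finset.univ (fun w => H.dist r w)
    ⟨r, Finset.mem_univ r⟩
  refine ⟨x, ?_⟩
  have key : ∀ y : W, y ≠ x → ∃ p : H.Walk y r, x ∉ p.support := by
    intro y hy
    obtain ⟨p, hp⟩ := (hH y r).exists_walk_length_eq_dist
    by_cases hxp : x ∈ p.support
    · exfalso
      have hlen : (p.takeUntil x hxp).length + (p.dropUntil x hxp).length = H.dist y r := by
        rw [← hp, ← Walk.length_append, Walk.take_spec]
      have h1 : 1 ≤ (p.takeUntil x hxp).length := by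
        rcases Nat.eq_zero_or_pos (p.takeUntil x hxp).length with h | h
        · exact absurd (Walk.eq_of_length_eq_zero h) hy
        · exact h
      have h2 : H.dist r x ≤ (p.dropUntil x hxp).length := by
        calc H.dist r x = H.dist x r := H.dist_comm
        _ ≤ _ := SimpleGraph.dist_le _
      have h3 : H.dist r y ≤ H.dist r x := hx y (Finset.mem_univ y)
      have h4 : H.dist r y = H.dist y r := H.dist_comm
      omega
    · exact ⟨p, hxp⟩
  intro y z hy hz
  obtain ⟨p₁, h1⟩ := key y hy
  obtain ⟨p₂, h2⟩ := key z hz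
  refine ⟨p₁.append p₂.reverse, ?_⟩
  rw [Walk.mem_support_append_iff, Walk.support_reverse]
  simp only [List.mem_reverse]
  tauto

lemma compress {V : Type*} {m : ℕ} (f : V → Fin (m + 1)) (i₀ : Fin (m + 1))
    (h : ∀ v, f v ≠ i₀) : ∃ f' : V → Fin m, ∀ u v, f' u = f' v ↔ f u = f v := by
  have hs : ∀ v, ((finSuccEquiv' i₀) (f v)).isSome := by
    intro v
    rw [← Option.ne_none_iff_isSome]
    intro hn
    exact h v ((finSuccEquiv' i₀).injective (hn.trans (finSuccEquiv'_at i₀).symm))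
  refine ⟨fun v => ((finSuccEquiv' i₀) (f v)).get (hs v), fun u v =>
    ⟨fun huv => ?_, fun huv => by simp only [huv]⟩⟩
  have h2 : (finSuccEquiv' i₀) (f u) = (finSuccEquiv' i₀) (f v) := by
    rw [← Option.some_get (hs u), ← Option.some_get (hs v)]
    exact congrArg _ huv
  exact (finSuccEquiv' i₀).injective h2

universe u

set_option maxHeartbeats 1000000 in
lemma key (m : ℕ) : ∀ (V : Type u) [Fintype V] (G : SimpleGraph V), G.Connected →
    ∀ f : V → Fin m, (∀ u v : V, u ≠ v → f u = f v → G.Adj u v) →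
    ∃ c : Sym2 V → Fin (2 * m - 1), RainbowConnectedWith G c := by
  induction m with
  | zero =>
    intro V _ G hG f _
    exact absurd (f hG.nonempty.some).isLt (by simp)
  | succ m ih =>
    intro V _ G hG f hf
    rcases Nat.eq_zero_or_pos m with rfl | hm
    · -- one class: G is a clique
      refine ⟨fun _ => ⟨0, by norm_num⟩, fun u v => ?_⟩
      by_cases huv : u = v
      · subst huv; exact ⟨Walk.nil, by simp, by simp⟩
      · refine ⟨Walk.cons (hf u v huv (Fin.ext (by omega))) Walk.nil, ?_, by simp⟩
        simp [Walk.cons_isPath_iff, huv]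
    by_cases hsur : ∀ i : Fin (m + 1), ∃ v, f v = i
    case neg =>
      push_neg at hsur
      obtain ⟨i₀, hi₀⟩ := hsur
      obtain ⟨f', hf'⟩ := compress f i₀ hi₀
      obtain ⟨c', hc'⟩ := ih V G hG f' (fun u v huv h => hf u v huv ((hf' u v).mp h))
      refine ⟨(Fin.castLE (by omega)) ∘ c', fun u v => ?_⟩
      obtain ⟨p, hp, hcp⟩ := hc' u v
      refine ⟨p, hp, ?_⟩
      rw [← List.map_map]
      exact hcp.map (Fin.castLE_injective _)
    case pos =>
      -- the quotient graph on classes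
      set Q : SimpleGraph (Fin (m + 1)) :=
        { Adj := fun i j => i ≠ j ∧ ∃ u v : V, f u = i ∧ f v = j ∧ G.Adj u v
          symm := ⟨by
            rintro i j ⟨hne, u, v, hu, hv, h⟩
            exact ⟨hne.symm, v, u, hv, hu, h.symm⟩⟩
          loopless := ⟨fun i h => h.1 rfl⟩ } with hQdef
      have qreach : ∀ {u v : V}, G.Walk u v → Q.Reachable (f u) (f v) := by
        intro u v p
        induction p with
        | nil => exact Reachable.refl _
        | @cons a b c h p ihp =>
          by_cases hab : f a = f b
          · rw [hab]; exact ihp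
          · refine (Adj.reachable ?_).trans ihp
            exact ⟨hab, a, b, rfl, rfl, h⟩
      have hQ : Q.Connected := by
        refine (connected_iff Q).mpr ⟨fun i j => ?_, ⟨0⟩⟩
        obtain ⟨u, hu⟩ := hsur i
        obtain ⟨v, hv⟩ := hsur j
        obtain ⟨p⟩ := hG.preconnected u v
        rw [← hu, ← hv]
        exact qreach p
      obtain ⟨istar, histar⟩ := exists_noncut Q hQ
      set V' : Set V := {v | f v ≠ istar} with hV'def
      haveI fV' : Fintype ↥V' := Fintype.ofFinite _
      -- realizing quotient walks avoiding istar inside the induced graph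
      have realize : ∀ {i j : Fin (m + 1)} (q : Q.Walk i j), istar ∉ q.support →
          ∀ (y z : V) (hy' : f y ≠ istar) (hz' : f z ≠ istar), f y = i → f z = j →
          (G.induce V').Reachable ⟨y, hy'⟩ ⟨z, hz'⟩ := by
        intro i j q
        induction q with
        | nil =>
          intro _ y z hy' hz' hy hz
          by_cases hyz : y = z
          · subst hyz; rfl
          · exact Adj.reachable (by exact hf y z hyz (hy.trans hz.symm))
        | @cons i i₁ j h q ihq =>
          intro hns y z hy' hz' hy hz
          rw [Walk.support_cons, List.mem_cons] at hns
          push_neg at hns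
          obtain ⟨hne, u', v', hu', hv', hadj⟩ := h
          have hu'' : f u' ≠ istar := by rw [hu']; exact fun e => hns.1 e.symm
          have hv'' : f v' ≠ istar := by
            rw [hv']; exact fun e => hns.2 (e ▸ q.start_mem_support)
          have r1 : (G.induce V').Reachable ⟨y, hy'⟩ ⟨u', hu''⟩ := by
            by_cases hyu : y = u'
            · subst hyu; rfl
            · exact Adj.reachable (by exact hf y u' hyu (hy.trans hu'.symm))
          have r2 : (G.induce V').Reachable ⟨u', hu''⟩ ⟨v', hv''⟩ :=
            Adj.reachable (by exact hadj)
          exact (r1.trans r2).trans (ihq hns.2 v' z hv'' hz' hv' hz)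
      -- the induced graph is connected
      haveI : Nontrivial (Fin (m + 1)) := Fin.nontrivial_iff_two_le.mpr (by omega)
      obtain ⟨j₀, hj₀⟩ := exists_ne istar
      obtain ⟨w₁, hw₁⟩ := hsur j₀
      have hw₁' : f w₁ ≠ istar := by rw [hw₁]; exact hj₀
      have hG' : (G.induce V').Connected := by
        refine (connected_iff _).mpr ⟨?_, ⟨⟨w₁, hw₁'⟩⟩⟩
        rintro ⟨a, ha⟩ ⟨b, hb⟩
        obtain ⟨q, hq⟩ := histar (f a) (f b) ha hb
        exact realize q hq a b ha hb rfl rfl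
      -- coloring of the induced graph from the induction hypothesis
      obtain ⟨f', hf'⟩ := compress (fun a : ↥V' => f a.val) istar (fun a => a.prop)
      have hf'c : ∀ a b : ↥V', a ≠ b → f' a = f' b → (G.induce V').Adj a b := by
        intro a b hab h
        exact hf a.val b.val (fun e => hab (Subtype.ext e)) ((hf' a b).mp h)
      obtain ⟨c', hc'⟩ := @ih ↥V' fV' (G.induce V') hG' f' hf'c
      -- build the new coloring
      set A : Fin (2 * (m + 1) - 1) := ⟨2 * m - 1, by omega⟩ with hA
      set B : Fin (2 * (m + 1) - 1) := ⟨2 * m, by omega⟩ with hB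
      set emb : Fin (2 * m - 1) → Fin (2 * (m + 1) - 1) := Fin.castLE (by omega) with hemb
      have embinj : Function.Injective emb := Fin.castLE_injective _
      obtain ⟨c, hcAA, hcB, hcV'⟩ :
          ∃ c : Sym2 V → Fin (2 * (m + 1) - 1),
            (∀ u v : V, f u = istar → f v = istar → c s(u, v) = A) ∧
            (∀ u v : V, f u = istar → f v ≠ istar → c s(u, v) = B) ∧
            (∀ a b : ↥V', c s(a.val, b.val) = emb (c' s(a, b))) := by
        have gsymm : ∀ u v : V,
            (if hu : f u = istar then (if f v = istar then A else B)
             else if hv : f v = istar then B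
             else emb (c' s(⟨u, hu⟩, ⟨v, hv⟩)))
          = (if hv : f v = istar then (if f u = istar then A else B)
             else if hu : f u = istar then B
             else emb (c' s(⟨v, hv⟩, ⟨u, hu⟩))) := by
          intro u v
          by_cases hu : f u = istar <;> by_cases hv : f v = istar <;>
            simp only [dif_pos, dif_neg, hu, hv, if_pos, if_neg, not_false_iff]
          rw [Sym2.eq_swap]
        refine ⟨Sym2.lift ⟨fun u v =>
          if hu : f u = istar then (if f v = istar then A else B)
          else if hv : f v = istar then B
          else emb (c' s(⟨u, hu⟩, ⟨v, hv⟩)), fun u v => gsymm u v⟩, ?_, ?_, ?_⟩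
        · intro u v hu hv
          simp only [Sym2.lift_mk, dif_pos hu, if_pos hv]
        · intro u v hu hv
          simp only [Sym2.lift_mk, dif_pos hu, if_neg hv]
        · rintro ⟨a, ha⟩ ⟨b, hb⟩
          simp only [Sym2.lift_mk, dif_neg ha, dif_neg hb]
      -- the inclusion homomorphism
      obtain ⟨φ, φinj, φval⟩ : ∃ φ : G.induce V' →g G,
          Function.Injective ⇑φ ∧ ∀ a : ↥V', φ a = a.val :=
        ⟨(SimpleGraph.Embedding.induce V').toHom, fun a b h => Subtype.ext h, fun a => rfl⟩
      have mapcolors : ∀ {a b : ↥V'} (p' : (G.induce V').Walk a b),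
          ((p'.map φ).edges.map c) = (p'.edges.map c').map emb := by
        intro a b p'
        rw [Walk.edges_map, List.map_map, List.map_map]
        congr 1
        funext e
        induction e with
        | h a b =>
          simp only [Function.comp_apply, Sym2.map_pair_eq, φval]
          exact hcV' a b
      have mapcolors_lt : ∀ {a b : ↥V'} (p' : (G.induce V').Walk a b),
          ∀ col ∈ (p'.map φ).edges.map c, col.val < 2 * m - 1 := by
        intro a b p' col hcol
        rw [mapcolors p'] at hcol
        obtain ⟨x, -, rfl⟩ := List.mem_map.mp hcol
        exact x.isLt
      have mapsupp : ∀ {a b : ↥V'} (p' : (G.induce V').Walk a b) (w : V),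
          w ∈ (p'.map φ).support → f w ≠ istar := by
        intro a b p' w hw
        rw [Walk.support_map] at hw
        obtain ⟨x, hx, rfl⟩ := List.mem_map.mp hw
        rw [φval]
        exact x.prop
      have mappath : ∀ {a b : ↥V'} {p' : (G.induce V').Walk a b}, p'.IsPath →
          (p'.map φ).IsPath := fun hp' => Walk.map_isPath_of_injective φinj hp'
      have hAB : A ≠ B := by
        intro h
        have := congrArg Fin.val h
        simp only [hA, hB] at this
        omega
      have hAval : (A : Fin (2 * (m + 1) - 1)).val = 2 * m - 1 := rfl
      have hBval : (B : Fin (2 * (m + 1) - 1)).val = 2 * m := rfl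
      -- a bridge edge
      have hbridge : ∃ x y : V, f x = istar ∧ f y ≠ istar ∧ G.Adj x y := by
        have main : ∀ (a b : V), G.Walk a b → f a = istar → f b ≠ istar →
            ∃ x y : V, f x = istar ∧ f y ≠ istar ∧ G.Adj x y := by
          intro a b p
          induction p with
          | nil => exact fun h1 h2 => absurd h1 h2
          | @cons a b d h p ihp =>
            intro h1 h2
            by_cases hb : f b = istar
            · exact ihp hb h2
            · exact ⟨a, b, h1, hb, h⟩
        obtain ⟨w₀, hw₀⟩ := hsur istar
        obtain ⟨p⟩ := hG.preconnected w₀ w₁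
        exact main w₀ w₁ p hw₀ hw₁'
      obtain ⟨x₀, y₀, hx₀, hy₀, hxy₀⟩ := hbridge
      have oneside : ∀ u v : V, f u = istar → f v ≠ istar →
          ∃ p : G.Walk u v, p.IsPath ∧ (p.edges.map c).Nodup := by
        intro u v hu hv
        obtain ⟨p', hp', hcp'⟩ := hc' ⟨y₀, hy₀⟩ ⟨v, hv⟩
        have hMpath : ((p'.map φ).copy (φval _) (φval _) : G.Walk y₀ v).IsPath := by
          rw [Walk.isPath_copy]; exact mappath hp'
        have hMcol : ((((p'.map φ).copy (φval _) (φval _) : G.Walk y₀ v)).edges.map c).Nodup := by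
          rw [Walk.edges_copy, mapcolors p']; exact hcp'.map embinj
        have hMcollt : ∀ col ∈ (((p'.map φ).copy (φval _) (φval _) : G.Walk y₀ v)).edges.map c,
            col.val < 2 * m - 1 := by
          rw [Walk.edges_copy]; exact mapcolors_lt p'
        have hMsupp : ∀ w ∈ (((p'.map φ).copy (φval _) (φval _) : G.Walk y₀ v)).support,
            f w ≠ istar := by
          rw [Walk.support_copy]; exact fun w hw => mapsupp p' w hw
        have hq₀path : (Walk.cons hxy₀ ((p'.map φ).copy (φval _) (φval _))).IsPath := by
          rw [Walk.cons_isPath_iff]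
          exact ⟨hMpath, fun hmem => hMsupp x₀ hmem hx₀⟩
        have hq₀col : ((Walk.cons hxy₀ ((p'.map φ).copy (φval _) (φval _))).edges.map c).Nodup := by
          rw [Walk.edges_cons, List.map_cons]
          refine List.nodup_cons.mpr ⟨?_, hMcol⟩
          rw [hcB x₀ y₀ hx₀ hy₀]
          intro hmem
          have := hMcollt B hmem
          rw [hBval] at this
          omega
        by_cases hux : u = x₀
        · subst hux
          exact ⟨_, hq₀path, hq₀col⟩
        · refine ⟨Walk.cons (hf u x₀ hux (hu.trans hx₀.symm))
            (Walk.cons hxy₀ ((p'.map φ).copy (φval _) (φval _))), ?_, ?_⟩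
          · rw [Walk.cons_isPath_iff]
            refine ⟨hq₀path, ?_⟩
            rw [Walk.support_cons, List.mem_cons]
            rintro (rfl | hmem)
            · exact hux rfl
            · exact hMsupp u hmem hu
          · rw [Walk.edges_cons, List.map_cons]
            refine List.nodup_cons.mpr ⟨?_, hq₀col⟩
            rw [hcAA u x₀ hu hx₀, Walk.edges_cons, List.map_cons, List.mem_cons]
            rintro (hmem | hmem)
            · rw [hcB x₀ y₀ hx₀ hy₀] at hmem
              exact hAB hmem
            · have := hMcollt A hmem
              rw [hAval] at this
              omega
      refine ⟨c, fun u v => ?_⟩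
      by_cases hu : f u = istar <;> by_cases hv : f v = istar
      · by_cases huv : u = v
        · subst huv; exact ⟨Walk.nil, by simp, by simp⟩
        · exact ⟨Walk.cons (hf u v huv (hu.trans hv.symm)) Walk.nil,
            by simp [Walk.cons_isPath_iff, huv], by simp⟩
      · exact oneside u v hu hv
      · obtain ⟨p, hp, hcp⟩ := oneside v u hv hu
        exact ⟨p.reverse, hp.reverse, by
          rw [Walk.edges_reverse, List.map_reverse, List.nodup_reverse]; exact hcp⟩
      · obtain ⟨p', hp', hcp'⟩ := hc' ⟨u, hu⟩ ⟨v, hv⟩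
        refine ⟨(p'.map φ).copy (φval _) (φval _), ?_, ?_⟩
        · rw [Walk.isPath_copy]; exact mappath hp'
        · rw [Walk.edges_copy, mapcolors p']
          exact hcp'.map embinj

/-- If `G` is a connected graph, then `rc(G) ≤ 2χ(Ḡ) − 1`, where `Ḡ` is the
complement of `G`. -/
theorem rc_le_two_mul_chromaticNumber_compl_sub_one {V : Type*} [Fintype V]
    (G : SimpleGraph V) (hG : G.Connected) :
    (rc G : ℕ∞) ≤ 2 * Gᶜ.chromaticNumber - 1 := by
  have hcol : Gᶜ.Colorable (ENat.toNat Gᶜ.chromaticNumber) :=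
    Gᶜ.colorable_chromaticNumber_of_fintype
  have hne : Gᶜ.chromaticNumber ≠ ⊤ := by
    rw [chromaticNumber_ne_top_iff_exists]
    exact ⟨_, Gᶜ.colorable_of_fintype⟩
  set n : ℕ := ENat.toNat Gᶜ.chromaticNumber with hn
  have hχ : (n : ℕ∞) = Gᶜ.chromaticNumber := ENat.coe_toNat hne
  obtain ⟨C⟩ := hcol
  have hclq : ∀ u v : V, u ≠ v → C u = C v → G.Adj u v := by
    intro u v huv h
    by_contra hadj
    exact C.valid (show Gᶜ.Adj u v from ⟨huv, hadj⟩) h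
  obtain ⟨c, hc⟩ := key n V G hG (⇑C) hclq
  have hrc : rc G ≤ 2 * n - 1 := Nat.sInf_le ⟨c, hc⟩
  calc (rc G : ℕ∞) ≤ ((2 * n - 1 : ℕ) : ℕ∞) := by exact_mod_cast hrc
    _ = 2 * (n : ℕ∞) - 1 := by
        rw [ENat.coe_sub, Nat.cast_mul, Nat.cast_one, Nat.cast_ofNat]
    _ = 2 * Gᶜ.chromaticNumber - 1 := by rw [hχ]
end

section
/- Let G be a connected graph with minimum degree δ(G) ≥ 2, and let D ⊆ V(G) be a connected dominating set of G. Then rc(G) ≤ rc(G[D]) + 3, where G[D] is the subgraph of G induced by D. -/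
open SimpleGraph

/-- If `G` is connected with minimum degree at least 2 and `D` is a connected
dominating set of `G`, then `rc(G) ≤ rc(G[D]) + 3`. -/
theorem rc_le_rc_induce_add_three {V : Type*} [Fintype V] (G : SimpleGraph V)
    [DecidableRel G.Adj] (hG : G.Connected) (hδ : ∀ v : V, 2 ≤ G.degree v)
    (D : Set V) (hDconn : (G.induce D).Connected)
    (hDdom : ∀ v ∉ D, ∃ u ∈ D, G.Adj u v) :
    rc G ≤ rc (G.induce D) + 3 := by
  classical
  -- Step 1: an optimal rainbow coloring of the induced graph
  have hne : Set.Nonempty {n | ∃ c : Sym2 ↑D → Fin n, RainbowConnectedWith (G.induce D) c} := by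
    refine ⟨Fintype.card (Sym2 ↑D), Fintype.equivFin (Sym2 ↑D), fun u v => ?_⟩
    obtain ⟨p⟩ := hDconn.preconnected u v
    exact ⟨p.bypass, p.bypass_isPath,
      List.Nodup.map (Fintype.equivFin (Sym2 ↑D)).injective
        p.bypass_isPath.isTrail.edges_nodup⟩
  set k := rc (G.induce D) with hkdef
  obtain ⟨c0, hc0⟩ : ∃ c : Sym2 ↑D → Fin k,
      RainbowConnectedWith (G.induce D) c := Nat.sInf_mem hne
  -- Step 2: for each outside vertex, a dominating neighbor `d1`
  have hd1' : ∀ v : V, ∃ u : V, v ∉ D → u ∈ D ∧ G.Adj v u := by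
    intro v
    by_cases hv : v ∈ D
    · exact ⟨v, fun h => absurd hv h⟩
    · obtain ⟨u, hu, hadj⟩ := hDdom v hv
      exact ⟨u, fun _ => ⟨hu, hadj.symm⟩⟩
  choose d1 hd1 using hd1'
  -- `Multi v` : `v` has at least two neighbors in `D`
  set Multi : V → Prop := fun v => ∃ u, u ∈ D ∧ G.Adj v u ∧ u ≠ d1 v with hMulti
  have hd2' : ∀ v : V, ∃ u : V, Multi v → u ∈ D ∧ G.Adj v u ∧ u ≠ d1 v := by
    intro v
    by_cases h : Multi v
    · obtain ⟨u, hu⟩ := h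
      exact ⟨u, fun _ => hu⟩
    · exact ⟨v, fun hc => absurd hc h⟩
  choose d2 hd2 using hd2'
  -- Step 3: a max-cut two-coloring of the "single" outside vertices
  set P : (V → Bool) → Sym2 V → Prop := fun col e =>
    ∃ x y, e = s(x, y) ∧ x ∉ D ∧ ¬ Multi x ∧ y ∉ D ∧ ¬ Multi y ∧ col x ≠ col y with hP
  set F : (V → Bool) → ℕ := fun col => (G.edgeFinset.filter (P col)).card with hF
  obtain ⟨col, -, hcolmax⟩ :=
    Finset.exists_max_image (Finset.univ : Finset (V → Bool)) F
      ⟨fun _ => true, Finset.mem_univ _⟩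
  -- Step 4: every single vertex has a suitable outside neighbor
  have hbw : ∀ v : V, v ∉ D → ¬ Multi v →
      ∃ w : V, G.Adj v w ∧ w ∉ D ∧ (Multi w ∨ col w ≠ col v) := by
    intro v hvD hvM
    by_contra hcon
    push_neg at hcon
    -- hcon : ∀ w, G.Adj v w → w ∉ D → ¬ Multi w ∧ col w = col v
    have hmem1 : d1 v ∈ G.neighborFinset v := by
      rw [SimpleGraph.mem_neighborFinset]; exact (hd1 v hvD).2
    have hdeg2 : 2 ≤ (G.neighborFinset v).card := hδ v
    have hcard : 0 < ((G.neighborFinset v).erase (d1 v)).card := by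
      rw [Finset.card_erase_of_mem hmem1]
      omega
    obtain ⟨w0, hw0e⟩ := Finset.card_pos.mp hcard
    rw [Finset.mem_erase, SimpleGraph.mem_neighborFinset] at hw0e
    obtain ⟨hw0ne, hw0adj⟩ := hw0e
    have hw0D : w0 ∉ D := fun h => hvM ⟨w0, h, hw0adj, hw0ne⟩
    obtain ⟨hw0M, hw0col⟩ := hcon w0 hw0adj hw0D
    set col' := Function.update col v (!col v) with hcol'
    have hvne : ∀ y, G.Adj v y → y ≠ v := fun y hy => (G.ne_of_adj hy.symm)
    have hsub : G.edgeFinset.filter (P col) ⊆ G.edgeFinset.filter (P col') := by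
      intro e he
      rw [Finset.mem_filter] at he ⊢
      obtain ⟨heE, x, y, hexy, hxD, hxM, hyD, hyM, hxyc⟩ := he
      have hadjxy : G.Adj x y := by
        rw [SimpleGraph.mem_edgeFinset, hexy] at heE; exact heE
      have hxv : x ≠ v := by
        rintro rfl
        exact hxyc (hcon y hadjxy hyD).2.symm
      have hyv : y ≠ v := by
        rintro rfl
        exact hxyc (hcon x hadjxy.symm hxD).2
      refine ⟨heE, x, y, hexy, hxD, hxM, hyD, hyM, ?_⟩
      rwa [hcol', Function.update_of_ne hxv, Function.update_of_ne hyv]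
    have hnotmem : ¬ P col s(v, w0) := by
      rintro ⟨x, y, hexy, -, -, -, -, hxyc⟩
      rw [Sym2.eq_iff] at hexy
      rcases hexy with ⟨hx, hy⟩ | ⟨hx, hy⟩
      · exact hxyc (hx ▸ hy ▸ hw0col.symm)
      · exact hxyc (hx ▸ hy ▸ hw0col)
    have hmemnew : s(v, w0) ∈ G.edgeFinset.filter (P col') := by
      rw [Finset.mem_filter, SimpleGraph.mem_edgeFinset]
      refine ⟨hw0adj, v, w0, rfl, hvD, hvM, hw0D, hw0M, ?_⟩
      rw [hcol', Function.update_self, Function.update_of_ne (hvne w0 hw0adj)]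
      rw [hw0col]
      exact Bool.not_ne_self (col v)
    have hnotold : s(v, w0) ∉ G.edgeFinset.filter (P col) := by
      intro h
      exact hnotmem (Finset.mem_filter.mp h).2
    have hlt : F col < F col' :=
      Finset.card_lt_card ⟨hsub, fun hba => hnotold (hba hmemnew)⟩
    exact absurd (hcolmax col' (Finset.mem_univ _)) (by omega)
  -- Step 5: the coloring of `G`
  have hk3 : k ≤ k + 3 := by omega
  set A : Fin (k + 3) := ⟨k, by omega⟩ with hA
  set Bc : Fin (k + 3) := ⟨k + 1, by omega⟩ with hBc
  set Cc : Fin (k + 3) := ⟨k + 2, by omega⟩ with hCc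
  have hAval : (A : Fin (k + 3)).val = k := by rw [hA]
  have hBval : (Bc : Fin (k + 3)).val = k + 1 := by rw [hBc]
  have hCval : (Cc : Fin (k + 3)).val = k + 2 := by rw [hCc]
  set dcol : V → V → Fin (k + 3) := fun v u =>
    if Multi v then (if u = d2 v then Bc else A)
    else (if col v = true then A else Bc) with hdcol
  set g : V → V → Fin (k + 3) := fun x y =>
    if hx : x ∈ D then
      (if hy : y ∈ D then Fin.castLE hk3 (c0 s(⟨x, hx⟩, ⟨y, hy⟩)) else dcol y x)
    else (if y ∈ D then dcol x y else Cc) with hg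
  have hgsymm : ∀ x y, g x y = g y x := by
    intro x y
    by_cases hx : x ∈ D <;> by_cases hy : y ∈ D <;>
      simp only [hg, hx, hy, dif_pos, dif_neg, if_pos, if_neg, not_false_iff]
    · congr 1
      rw [Sym2.eq_swap]
  set c : Sym2 V → Fin (k + 3) := Sym2.lift ⟨g, hgsymm⟩ with hc
  have hcDD : ∀ (x y : V) (hx : x ∈ D) (hy : y ∈ D),
      c s(x, y) = Fin.castLE hk3 (c0 s(⟨x, hx⟩, ⟨y, hy⟩)) := by
    intro x y hx hy
    show g x y = _
    rw [hg]
    simp only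
    rw [dif_pos hx, dif_pos hy]
  have hcBD : ∀ (v u : V), v ∉ D → u ∈ D → c s(v, u) = dcol v u := by
    intro v u hv hu
    show g v u = _
    rw [hg]
    simp only
    rw [dif_neg hv, if_pos hu]
  have hcBB : ∀ (v w : V), v ∉ D → w ∉ D → c s(v, w) = Cc := by
    intro v w hv hw
    show g v w = _
    rw [hg]
    simp only
    rw [dif_neg hv, if_neg hw]
  set scol : V → Fin (k + 3) := fun v =>
    if Multi v then A else (if col v = true then A else Bc) with hscol
  have hscolk : ∀ v, k ≤ (scol v).val := by
    intro v
    rw [hscol]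
    simp only
    split_ifs <;> omega
  have hscolkk : ∀ v, (scol v).val ≤ k + 1 := by
    intro v
    rw [hscol]
    simp only
    split_ifs <;> omega
  have hdcold1 : ∀ v, dcol v (d1 v) = scol v := by
    intro v
    by_cases h : Multi v
    · have hne2 := (hd2 v h).2.2
      rw [hdcol, hscol]
      simp only [if_pos h]
      rw [if_neg (fun he => hne2 he.symm)]
    · rw [hdcol, hscol]
      simp only [if_neg h]
  -- mapping the induced walks to G
  have hmap : ∀ e : Sym2 ↑D, c (Sym2.map (⇑(Embedding.induce D (G := G)).toHom) e)
      = Fin.castLE hk3 (c0 e) := by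
    intro e
    induction e using Sym2.ind with
    | _ a b =>
      rw [Sym2.map_pair_eq]
      have : (⇑(Embedding.induce D (G := G)).toHom) a = a.1 := rfl
      rw [this]
      have : (⇑(Embedding.induce D (G := G)).toHom) b = b.1 := rfl
      rw [this]
      rw [hcDD a.1 b.1 a.2 b.2]
  have hemb : ∀ (du dv : V), du ∈ D → dv ∈ D →
      ∃ q : G.Walk du dv, (q.edges.map c).Nodup ∧ ∀ x ∈ q.edges.map c, x.val < k := by
    intro du dv h1 h2
    obtain ⟨p, hp, hpn⟩ := hc0 ⟨du, h1⟩ ⟨dv, h2⟩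
    refine ⟨p.map (Embedding.induce D (G := G)).toHom, ?_, ?_⟩
    · erw [Walk.edges_map, List.map_map]
      have heq : List.map (c ∘ Sym2.map (⇑(Embedding.induce D (G := G)).toHom)) p.edges
          = List.map (fun e => Fin.castLE hk3 (c0 e)) p.edges :=
        List.map_congr_left (fun e _ => hmap e)
      rw [heq]
      have : List.map (fun e => Fin.castLE hk3 (c0 e)) p.edges
          = List.map (Fin.castLE hk3) (List.map c0 p.edges) := by
        rw [List.map_map]; rfl
      rw [this]
      exact hpn.map (Fin.castLE_injective hk3)
    · intro x hx
      erw [Walk.edges_map, List.map_map] at hx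
      obtain ⟨e, -, he⟩ := List.mem_map.mp hx
      have := hmap e
      simp only [Function.comp] at he
      rw [this] at he
      rw [← he]
      exact (c0 e).2
  -- Step 6: the walk builder
  have build : ∀ (u v du dv : V), du ∈ D → dv ∈ D →
      ∀ (e1 : G.Walk u du) (e2 : G.Walk v dv),
      (∀ x ∈ e1.edges.map c, k ≤ x.val) → (∀ x ∈ e2.edges.map c, k ≤ x.val) →
      (e1.edges.map c).Nodup → (e2.edges.map c).Nodup →
      (∀ x ∈ e1.edges.map c, x ∉ e2.edges.map c) →
      ∃ p : G.Walk u v, p.IsPath ∧ (p.edges.map c).Nodup := by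
    intro u v du dv h1 h2 e1 e2 hb1 hb2 hn1 hn2 hdisj
    obtain ⟨q, hqn, hqb⟩ := hemb du dv h1 h2
    set p := e1.append (q.append e2.reverse) with hp
    have hpe : p.edges.map c
        = e1.edges.map c ++ (q.edges.map c ++ (e2.edges.map c).reverse) := by
      rw [hp, Walk.edges_append, Walk.edges_append, Walk.edges_reverse,
        List.map_append, List.map_append, List.map_reverse]
    have hnd : (p.edges.map c).Nodup := by
      rw [hpe]
      refine List.Nodup.append hn1 (List.Nodup.append hqn (List.nodup_reverse.mpr hn2) ?_) ?_
      · intro x hxq hxe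
        rw [List.mem_reverse] at hxe
        exact absurd (hb2 x hxe) (by have := hqb x hxq; omega)
      · intro x hx1 hx2
        rcases List.mem_append.mp hx2 with hxq | hxe
        · exact absurd (hb1 x hx1) (by have := hqb x hxq; omega)
        · rw [List.mem_reverse] at hxe
          exact hdisj x hx1 hxe
    refine ⟨p.bypass, p.bypass_isPath, ?_⟩
    exact List.Nodup.map_on
      (fun x hx y hy hxy => List.inj_on_of_nodup_map hnd
        (Walk.edges_bypass_subset p hx) (Walk.edges_bypass_subset p hy) hxy)
      p.bypass_isPath.isTrail.edges_nodup
  -- Step 7: exit walks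
  have exit0 : ∀ u : V, ∃ (du : V) (_ : du ∈ D) (e : G.Walk u du),
      e.edges.map c = if u ∈ D then [] else [scol u] := by
    intro u
    by_cases hu : u ∈ D
    · exact ⟨u, hu, Walk.nil, by rw [if_pos hu]; rfl⟩
    · obtain ⟨h1D, h1adj⟩ := hd1 u hu
      refine ⟨d1 u, h1D, Walk.cons h1adj Walk.nil, ?_⟩
      rw [if_neg hu]
      show [c s(u, d1 u)] = [scol u]
      rw [hcBD u (d1 u) hu h1D, hdcold1]
  have exit1 : ∀ v : V, v ∉ D →
      ∃ (dv : V) (_ : dv ∈ D) (e : G.Walk v dv) (L : List (Fin (k + 3))),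
      e.edges.map c = L ∧ (∀ x ∈ L, k ≤ x.val) ∧ L.Nodup ∧ ∀ x ∈ L, x ≠ scol v := by
    intro v hv
    by_cases hm : Multi v
    · obtain ⟨h2D, h2adj, h2ne⟩ := hd2 v hm
      refine ⟨d2 v, h2D, Walk.cons h2adj Walk.nil, [Bc], ?_, ?_, ?_, ?_⟩
      · show [c s(v, d2 v)] = [Bc]
        rw [hcBD v (d2 v) hv h2D]
        simp [hdcol, hm]
      · intro x hx
        rw [List.mem_singleton] at hx
        subst hx; omega
      · exact List.nodup_singleton _
      · intro x hx
        rw [List.mem_singleton] at hx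
        subst hx
        have : (scol v).val = k := by rw [hscol]; simp only [if_pos hm, hAval]
        intro hh
        rw [hh] at hBval
        omega
    · obtain ⟨w, hadj, hwD, hwor⟩ := hbw v hv hm
      have hsv : scol v = (if col v = true then A else Bc) := by
        rw [hscol]; simp only [if_neg hm]
      -- the second edge of the exit walk, from w into D, with color ≠ scol v
      have hstep : ∃ (t : V) (_ : t ∈ D) (_ : G.Adj w t), dcol w t ≠ scol v := by
        by_cases hmw : Multi w
        · by_cases hcv : col v = true
          · -- scol v = A, use w's Bc-edge
            refine ⟨d2 w, (hd2 w hmw).1, (hd2 w hmw).2.1, ?_⟩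
            have hdw : dcol w (d2 w) = Bc := by simp [hdcol, hmw]
            rw [hdw, hsv, if_pos hcv]
            intro hh; rw [hh] at hBval; omega
          · refine ⟨d1 w, (hd1 w hwD).1, (hd1 w hwD).2, ?_⟩
            rw [hdcold1]
            have hsw : scol w = A := by simp [hscol, hmw]
            rw [hsw, hsv, if_neg hcv]
            intro hh; rw [← hh] at hBval; omega
        · -- w is single, so col w ≠ col v
          have hcolne : col w ≠ col v := hwor.resolve_left hmw
          refine ⟨d1 w, (hd1 w hwD).1, (hd1 w hwD).2, ?_⟩
          rw [hdcold1]
          have hsw : scol w = (if col w = true then A else Bc) := by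
            simp [hscol, hmw]
          rw [hsw, hsv]
          by_cases hcw : col w = true
          · rw [if_pos hcw]
            have hcv : ¬ (col v = true) := fun h => hcolne (hcw.trans h.symm)
            rw [if_neg hcv]
            intro hh; rw [hh] at hAval; omega
          · rw [if_neg hcw]
            have hw2 : col w = false := by
              cases h : col w
              · rfl
              · exact absurd h hcw
            have hcv : col v = true := by
              cases h : col v
              · exact absurd (hw2.trans h.symm) hcolne
              · rfl
            rw [if_pos hcv]
            intro hh; rw [← hh] at hAval; omega
      obtain ⟨t, htD, htadj, htcol⟩ := hstep
      refine ⟨t, htD, Walk.cons hadj (Walk.cons htadj Walk.nil), [Cc, dcol w t],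
        ?_, ?_, ?_, ?_⟩
      · show [c s(v, w), c s(w, t)] = [Cc, dcol w t]
        rw [hcBB v w hv hwD, hcBD w t hwD htD]
      · intro x hx
        rcases List.mem_cons.mp hx with rfl | hx2
        · omega
        · rw [List.mem_singleton] at hx2
          subst hx2
          simp only [hdcol]
          split_ifs <;> omega
      · refine List.nodup_cons.mpr ⟨?_, List.nodup_singleton _⟩
        rw [List.mem_singleton]
        intro hh
        have : (dcol w t).val ≤ k + 1 := by simp only [hdcol]; split_ifs <;> omega
        rw [← hh] at this
        omega
      · intro x hx
        rcases List.mem_cons.mp hx with rfl | hx2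
        · intro hh
          have h1 := hscolkk v
          rw [← hh] at h1
          omega
        · rw [List.mem_singleton] at hx2
          subst hx2
          exact htcol
  -- Step 8: conclusion
  have hrc : RainbowConnectedWith G c := by
    intro u v
    obtain ⟨du, hdu, e1, hL1⟩ := exit0 u
    by_cases hu : u ∈ D
    · -- e1 has no edges
      obtain ⟨dv, hdv, e2, hL2⟩ := exit0 v
      refine build u v du dv hdu hdv e1 e2 ?_ ?_ ?_ ?_ ?_
      · rw [hL1, if_pos hu]; intro x hx; exact absurd hx List.not_mem_nil
      · rw [hL2]
        split_ifs with hv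
        · intro x hx; exact absurd hx List.not_mem_nil
        · intro x hx
          rw [List.mem_singleton] at hx; subst hx; exact hscolk v
      · rw [hL1, if_pos hu]; exact List.nodup_nil
      · rw [hL2]; split_ifs
        · exact List.nodup_nil
        · exact List.nodup_singleton _
      · rw [hL1, if_pos hu]; intro x hx; exact absurd hx List.not_mem_nil
    · by_cases hv : v ∈ D
      · obtain ⟨dv, hdv, e2, hL2⟩ := exit0 v
        refine build u v du dv hdu hdv e1 e2 ?_ ?_ ?_ ?_ ?_
        · rw [hL1, if_neg hu]
          intro x hx; rw [List.mem_singleton] at hx; subst hx; exact hscolk u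
        · rw [hL2, if_pos hv]; intro x hx; exact absurd hx List.not_mem_nil
        · rw [hL1, if_neg hu]; exact List.nodup_singleton _
        · rw [hL2, if_pos hv]; exact List.nodup_nil
        · rw [hL2, if_pos hv]; intro x _ hx; exact absurd hx List.not_mem_nil
      · by_cases hsame : scol u = scol v
        · obtain ⟨dv, hdv, e2, L, hL, hLb, hLn, hLne⟩ := exit1 v hv
          refine build u v du dv hdu hdv e1 e2 ?_ ?_ ?_ ?_ ?_
          · rw [hL1, if_neg hu]
            intro x hx; rw [List.mem_singleton] at hx; subst hx; exact hscolk u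
          · rw [hL]; exact hLb
          · rw [hL1, if_neg hu]; exact List.nodup_singleton _
          · rw [hL]; exact hLn
          · rw [hL1, if_neg hu, hL]
            intro x hx
            rw [List.mem_singleton] at hx; subst hx
            intro hxL
            exact hLne _ hxL (hsame ▸ rfl)
        · obtain ⟨dv, hdv, e2, hL2⟩ := exit0 v
          refine build u v du dv hdu hdv e1 e2 ?_ ?_ ?_ ?_ ?_
          · rw [hL1, if_neg hu]
            intro x hx; rw [List.mem_singleton] at hx; subst hx; exact hscolk u
          · rw [hL2, if_neg hv]
            intro x hx; rw [List.mem_singleton] at hx; subst hx; exact hscolk v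
          · rw [hL1, if_neg hu]; exact List.nodup_singleton _
          · rw [hL2, if_neg hv]; exact List.nodup_singleton _
          · rw [hL1, if_neg hu, hL2, if_neg hv]
            intro x hx
            rw [List.mem_singleton] at hx; subst hx
            rw [List.mem_singleton]
            exact hsame
  exact Nat.sInf_le ⟨c, hrc⟩
end

section
/- Every connected graph G contains a connected dominating set D and a set Y ⊆ D such that Y is an independent set of G and |D| = 2|Y| − 1. -/
open SimpleGraph

lemma aux_step {V : Type*} [Fintype V] [DecidableEq V]
    (G : SimpleGraph V) (hG : G.Connected) :
    ∀ n : ℕ, ∀ D Y : Finset V, (Finset.univ \ D).card ≤ n → Y ⊆ D →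
      (G.induce (↑D : Set V)).Connected →
      ((↑Y : Set V).Pairwise fun a b => ¬ G.Adj a b) →
      D.card = 2 * Y.card - 1 →
      ∃ D' Y' : Finset V, Y' ⊆ D' ∧
        (G.induce (↑D' : Set V)).Connected ∧
        (∀ v ∉ D', ∃ u ∈ D', G.Adj u v) ∧
        ((↑Y' : Set V).Pairwise fun a b => ¬ G.Adj a b) ∧
        D'.card = 2 * Y'.card - 1 := by
  intro n
  induction n with
  | zero =>
    intro D Y hcard hYD hconn hindep hcardeq
    refine ⟨D, Y, hYD, hconn, ?_, hindep, hcardeq⟩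
    intro v hv
    exfalso
    have : v ∈ Finset.univ \ D := by simp [hv]
    have := Finset.card_pos.mpr ⟨v, this⟩
    omega
  | succ n ih =>
    intro D Y hcard hYD hconn hindep hcardeq
    by_cases hdom : ∀ v ∉ D, ∃ u ∈ D, G.Adj u v
    · exact ⟨D, Y, hYD, hconn, hdom, hindep, hcardeq⟩
    · push_neg at hdom
      obtain ⟨v, hvD, hvnadj⟩ := hdom
      -- the set of dominated vertices
      set S : Set V := ↑D ∪ {x | ∃ d ∈ D, G.Adj d x} with hS
      have hDne : D.Nonempty := by
        have := hconn.nonempty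
        obtain ⟨⟨x, hx⟩⟩ := this
        exact ⟨x, hx⟩
      obtain ⟨d0, hd0⟩ := hDne
      have hvS : v ∉ S := by
        intro hv
        rcases hv with hv | ⟨d, hd, hadj⟩
        · exact hvD hv
        · exact hvnadj d hd hadj
      have hd0S : (d0 : V) ∈ S := Or.inl hd0
      obtain ⟨p⟩ := hG.preconnected d0 v
      obtain ⟨dart, _, huS, hwS⟩ := p.exists_boundary_dart S hd0S hvS
      set u := dart.fst with hu
      set w := dart.snd with hw
      have hadjuw : G.Adj u w := dart.adj
      have hwD : w ∉ D := fun h => hwS (Or.inl h)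
      have hwnadj : ∀ d ∈ D, ¬ G.Adj d w := fun d hd hadj => hwS (Or.inr ⟨d, hd, hadj⟩)
      have huD : u ∉ D := fun h => hwS (Or.inr ⟨u, h, hadjuw⟩)
      obtain ⟨d, hdD, hadjdu⟩ : ∃ d ∈ D, G.Adj d u := by
        rcases huS with h | h
        · exact absurd h huD
        · exact h
      have hwu : w ≠ u := fun h => huD (by
        exfalso; exact hwnadj d hdD (h ▸ hadjdu))
      -- new sets
      set D' : Finset V := insert w (insert u D) with hD'
      set Y' : Finset V := insert w Y with hY'
      have hwD'not : w ∉ insert u D := by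
        simp only [Finset.mem_insert]
        rintro (h | h)
        · exact hwu h
        · exact hwD h
      have hcardD' : D'.card = D.card + 2 := by
        rw [hD', Finset.card_insert_of_notMem hwD'not,
          Finset.card_insert_of_notMem huD]
      have hwY : w ∉ Y := fun h => hwD (hYD h)
      have hcardY' : Y'.card = Y.card + 1 := Finset.card_insert_of_notMem hwY
      -- connectivity
      have hconn' : (G.induce (↑D' : Set V)).Connected := by
        have h1 : (G.induce ((↑D : Set V) ∪ {d, u})).Connected := by
          apply SimpleGraph.induce_union_connected hconn.preconnected
            (SimpleGraph.induce_pair_connected_of_adj hadjdu).preconnected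
          exact ⟨d, hdD, by simp⟩
        have h2 : (G.induce (((↑D : Set V) ∪ {d, u}) ∪ {u, w})).Connected := by
          apply SimpleGraph.induce_union_connected h1.preconnected
            (SimpleGraph.induce_pair_connected_of_adj hadjuw).preconnected
          exact ⟨u, Or.inr (by simp), by simp⟩
        have hset : ((↑D : Set V) ∪ {d, u}) ∪ {u, w} = (↑D' : Set V) := by
          rw [hD']
          push_cast
          ext x
          simp only [Set.mem_union, Set.mem_insert_iff, Set.mem_singleton_iff,
            Finset.coe_insert, Finset.mem_coe]
          constructor
          · rintro ((h | h | h) | h | h) <;> simp_all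
          · rintro (h | h | h) <;> simp_all
        rwa [hset] at h2
      -- independence
      have hindep' : ((↑Y' : Set V).Pairwise fun a b => ¬ G.Adj a b) := by
        rw [hY', Finset.coe_insert]
        rw [Set.pairwise_insert]
        refine ⟨hindep, ?_⟩
        intro y hy _
        have hyD : y ∈ D := hYD hy
        constructor
        · intro h; exact hwnadj y hyD h.symm
        · exact hwnadj y hyD
      -- measure
      have hmeas : (Finset.univ \ D').card ≤ n := by
        have hsub : Finset.univ \ D' ⊆ (Finset.univ \ D).erase w := by
          intro x hx
          simp only [Finset.mem_sdiff, Finset.mem_univ, true_and, Finset.mem_erase] at hx ⊢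
          constructor
          · intro h; apply hx; rw [hD']; simp [h]
          · intro h; apply hx; rw [hD']; simp [h]
        have hwmem : w ∈ Finset.univ \ D := by simp [hwD]
        have := Finset.card_le_card hsub
        rw [Finset.card_erase_of_mem hwmem] at this
        omega
      have hD1 : 1 ≤ D.card := Finset.card_pos.mpr ⟨d0, hd0⟩
      have hYD' : Y' ⊆ D' := by
        rw [hY', hD']
        intro x hx
        rcases Finset.mem_insert.mp hx with h | h
        · exact Finset.mem_insert.mpr (Or.inl h)
        · exact Finset.mem_insert.mpr (Or.inr (Finset.mem_insert.mpr (Or.inr (hYD h))))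
      exact ih D' Y' hmeas hYD' hconn' hindep' (by omega)

/-- Every connected graph contains a connected dominating set `D` together with
an independent set `Y ⊆ D` such that `|D| = 2|Y| − 1`. -/
theorem exists_connectedDominatingSet_card_eq {V : Type*} [Fintype V]
    (G : SimpleGraph V) (hG : G.Connected) :
    ∃ D Y : Finset V, Y ⊆ D ∧
      (G.induce (↑D : Set V)).Connected ∧
      (∀ v ∉ D, ∃ u ∈ D, G.Adj u v) ∧
      ((↑Y : Set V).Pairwise fun a b => ¬ G.Adj a b) ∧
      D.card = 2 * Y.card - 1 := by
  classical
  obtain ⟨v0⟩ := hG.nonempty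
  have hsingleton : (G.induce (↑({v0} : Finset V) : Set V)).Connected := by
    rw [SimpleGraph.connected_iff]
    refine ⟨?_, ?_⟩
    · intro a b
      have : a = b := Subtype.ext (by
        have ha := a.2
        have hb := b.2
        simp only [Finset.coe_singleton, Set.mem_singleton_iff] at ha hb
        rw [ha, hb])
      rw [this]
    · exact ⟨⟨v0, by simp⟩⟩
  obtain ⟨D, Y, h⟩ := aux_step G hG (Finset.univ \ {v0}).card {v0} {v0} le_rfl
    (Finset.Subset.refl _) hsingleton (by simp) (by simp)
  exact ⟨D, Y, h⟩
end

section
/- Every connected graph G contains a connected dominating set D with |D| ≤ 2α(G) − 1, where α(G) is the independence number of G. -/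
open SimpleGraph

/-- Auxiliary growing lemma: a connected set `D` containing an independent set
`S` with `|D| ≤ 2|S| - 1` can be grown into a connected dominating set that is
still accompanied by such an independent set. -/
lemma grow_aux {V : Type*} [Fintype V] [DecidableEq V] (G : SimpleGraph V)
    (hG : G.Connected) :
    ∀ n (D S : Finset V), Dᶜ.card = n → (G.induce (↑D : Set V)).Connected →
      S ⊆ D → (↑S : Set V).Pairwise (fun a b => ¬ G.Adj a b) →
      D.card ≤ 2 * S.card - 1 → 1 ≤ S.card →
      ∃ D' S' : Finset V, (G.induce (↑D' : Set V)).Connected ∧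
        (∀ v ∉ D', ∃ u ∈ D', G.Adj u v) ∧
        (↑S' : Set V).Pairwise (fun a b => ¬ G.Adj a b) ∧
        D'.card ≤ 2 * S'.card - 1 := by
  intro n
  induction n using Nat.strong_induction_on with
  | _ n ih =>
    intro D S hn hconn hSD hind hcard hS1
    by_cases hdom : ∀ v ∉ D, ∃ u ∈ D, G.Adj u v
    · exact ⟨D, S, hconn, hdom, hind, hcard⟩
    · push_neg at hdom
      obtain ⟨x, hxD, hxnd⟩ := hdom
      have hDne : D.Nonempty := Finset.card_pos.mp (hS1.trans (Finset.card_le_card hSD))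
      obtain ⟨d0, hd0⟩ := hDne
      -- the "dominated" set
      set T : Set V := {v | v ∈ D ∨ ∃ d ∈ D, G.Adj d v} with hT
      have hxT : x ∉ T := by
        rintro (h | ⟨d, hd, hadj⟩)
        · exact hxD h
        · exact hxnd d hd hadj
      have hd0T : d0 ∈ T := Or.inl hd0
      obtain ⟨p⟩ := hG x d0
      obtain ⟨dart, hdart, hw, hu⟩ := p.exists_boundary_dart Tᶜ hxT (by simpa using hd0T)
      set w := dart.fst
      set u := dart.snd
      have hadjwu : G.Adj w u := dart.adj
      have huT : u ∈ T := by simpa using hu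
      have hwT : w ∉ T := hw
      have hwD : w ∉ D := fun h => hwT (Or.inl h)
      have hwnd : ∀ d ∈ D, ¬ G.Adj d w := fun d hd hadj => hwT (Or.inr ⟨d, hd, hadj⟩)
      have huD : u ∉ D := fun h => hwnd u h hadjwu.symm
      obtain ⟨d, hdD, hdu⟩ : ∃ d ∈ D, G.Adj d u := huT.resolve_left huD
      -- grow the sets
      set D' : Finset V := insert u (insert w D) with hD'
      set S' : Finset V := insert w S with hS'
      have hsetD' : (↑D' : Set V) = ↑D ∪ {u, w} := by
        simp [hD', Set.insert_comm]
      have hconn' : (G.induce (↑D' : Set V)).Connected := by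
        rw [hsetD']
        exact connected_induce_union hconn.preconnected (induce_pair_connected_of_adj hadjwu.symm).preconnected
          hdD (by simp) hdu
      have hind' : (↑S' : Set V).Pairwise (fun a b => ¬ G.Adj a b) := by
        rw [hS', Finset.coe_insert]
        refine hind.insert ?_
        intro b hb _
        exact ⟨fun h => hwnd b (hSD hb) h.symm, fun h => hwnd b (hSD hb) h⟩
      have hwS : w ∉ S := fun h => hwD (hSD h)
      have hSD' : S' ⊆ D' := by
        intro a ha
        rcases Finset.mem_insert.mp ha with rfl | ha
        · exact Finset.mem_insert_of_mem (Finset.mem_insert_self _ _)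
        · exact Finset.mem_insert_of_mem (Finset.mem_insert_of_mem (hSD ha))
      have hcards' : S'.card = S.card + 1 := Finset.card_insert_of_notMem hwS
      have hcardD' : D'.card ≤ D.card + 2 := by
        rw [hD']
        have h1 := Finset.card_insert_le u (insert w D)
        have h2 := Finset.card_insert_le w D
        omega
      have hcard' : D'.card ≤ 2 * S'.card - 1 := by rw [hcards']; omega
      have hmeas : D'ᶜ.card < n := by
        rw [← hn]
        apply Finset.card_lt_card
        rw [Finset.ssubset_iff_of_subset (Finset.compl_subset_compl.mpr (by
          intro a ha; exact Finset.mem_insert_of_mem (Finset.mem_insert_of_mem ha)))]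
        exact ⟨w, by simpa using hwD, by simp [hD']⟩
      exact ih _ hmeas D' S' rfl hconn' hSD' hind' hcard' (by omega)

/-- Every connected graph contains a connected dominating set `D` with
`|D| ≤ 2α(G) − 1`. -/
theorem exists_connectedDominatingSet_card_le {V : Type*} [Fintype V]
    (G : SimpleGraph V) (hG : G.Connected) :
    ∃ D : Finset V,
      (G.induce (↑D : Set V)).Connected ∧
      (∀ v ∉ D, ∃ u ∈ D, G.Adj u v) ∧
      D.card ≤ 2 * _root_.indepNum G - 1 := by
  classical
  obtain ⟨v0⟩ := hG.nonempty
  have hsing : (G.induce (↑({v0} : Finset V) : Set V)).Connected := by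
    have := (Subgraph.singletonSubgraph_connected (G := G) (v := v0)).induce_verts
    rw [singletonSubgraph_verts] at this
    rwa [Finset.coe_singleton]
  obtain ⟨D, S, hconn, hdom, hind, hcard⟩ :=
    grow_aux G hG _ {v0} {v0} rfl hsing (Finset.Subset.refl _)
      (by simp) (by simp) (by simp)
  refine ⟨D, hconn, hdom, hcard.trans ?_⟩
  have hle : S.card ≤ _root_.indepNum G := by
    apply le_csSup
    · refine ⟨Fintype.card V, ?_⟩
      rintro m ⟨s, rfl, -⟩
      exact Finset.card_le_univ s
    · exact ⟨S, rfl, hind⟩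
  omega
end

section
/- Let G be a connected graph with minimum degree δ(G) ≥ 2, let D be a connected dominating set of G, and let Y ⊆ D be an independent set of G with |D| = 2|Y| − 1. If there exists a vertex w ∈ V(G) \ D that has no neighbor in Y, then rc(G) ≤ 2α(G) − 1. -/
open SimpleGraph

lemma exists_rainbow_path_of_walk {V : Type*} {G : SimpleGraph V} {β : Type*} (c : Sym2 V → β)
    {u v : V} (p : G.Walk u v) (h : (p.edges.map c).Nodup) :
    ∃ q : G.Walk u v, q.IsPath ∧ (q.edges.map c).Nodup := by
  classical
  refine ⟨p.bypass, p.bypass_isPath, ?_⟩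
  have hinj := List.inj_on_of_nodup_map h
  exact (p.bypass_isPath.edges_nodup).map_on
    (fun x hx y hy hxy => hinj (p.edges_bypass_subset hx) (p.edges_bypass_subset hy) hxy)


lemma exists_tree_coloring {α : Type*} [Fintype α] {H : SimpleGraph α} (hH : H.Connected) :
    ∃ c0 : Sym2 α → ℕ, ∀ u v : α, ∃ p : H.Walk u v,
      (∀ e ∈ p.edges, c0 e < Fintype.card α - 1) ∧ (p.edges.map c0).Nodup := by
  classical
  by_cases hs : ∀ a b : α, a = b
  · exact ⟨fun _ => 0, fun u v => (hs u v) ▸ ⟨Walk.nil, by simp, by simp⟩⟩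
  push_neg at hs
  obtain ⟨r, b, hab⟩ := hs
  haveI : Nontrivial α := ⟨r, b, hab⟩
  set m := Fintype.card α with hm
  have hm2 : 2 ≤ m := Fintype.one_lt_card
  -- the parent function
  have hpar : ∀ v : α, v ≠ r → ∃ u, H.Adj v u ∧ H.dist r u + 1 = H.dist r v := by
    intro v hv
    obtain ⟨p, hp⟩ := hH.exists_walk_length_eq_dist v r
    obtain ⟨w, h, q, rfl⟩ := Walk.exists_eq_cons_of_ne hv p
    refine ⟨w, h, ?_⟩
    have h1 : H.dist r w ≤ q.length := by rw [SimpleGraph.dist_comm]; exact dist_le q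
    have h2 : H.dist r v ≤ H.dist r w + 1 := by
      have := hH.dist_triangle (u := r) (v := w) (w := v)
      have hwv : H.dist w v = 1 := dist_eq_one_iff_adj.2 h.symm
      omega
    have hlen : q.length + 1 = H.dist r v := by
      rw [SimpleGraph.dist_comm]
      simpa [Walk.length_cons] using hp
    omega
  have hparex : ∀ v : α, ∃ u, v ≠ r → H.Adj v u ∧ H.dist r u + 1 = H.dist r v := by
    intro v
    by_cases hv : v = r
    · exact ⟨r, fun h => absurd hv h⟩
    · obtain ⟨u, h1, h2⟩ := hpar v hv
      exact ⟨u, fun _ => ⟨h1, h2⟩⟩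
  choose par hparspec using hparex
  -- injective indexing with value m-1 at r
  obtain ⟨ι, hιinj, hιlt⟩ : ∃ ι : α → ℕ, Function.Injective ι ∧ (∀ x, x ≠ r → ι x < m - 1) := by
    let e := Fintype.equivFin α
    let t : α := e.symm ⟨m - 1, by omega⟩
    refine ⟨fun x => (e (Equiv.swap r t x)).val, ?_, ?_⟩
    · intro x y hxy
      have := e.injective (Fin.ext hxy)
      exact (Equiv.swap r t).injective this
    · intro x hx
      show (e (Equiv.swap r t x)).val < m - 1
      have hne : Equiv.swap r t x ≠ t := by
        intro hc
        apply hx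
        have : Equiv.swap r t x = Equiv.swap r t r := by
          rw [hc, Equiv.swap_apply_left]
        exact (Equiv.swap r t).injective this
      have h1 : (e (Equiv.swap r t x)).val < m := (e _).isLt
      have h2 : (e (Equiv.swap r t x)).val ≠ m - 1 := by
        intro hc
        apply hne
        have : e (Equiv.swap r t x) = ⟨m - 1, by omega⟩ := Fin.ext hc
        rw [← Equiv.symm_apply_apply e (Equiv.swap r t x), this]
      omega
  set c0 : Sym2 α → ℕ :=
    fun e => if h : ∃ x, x ≠ r ∧ e = s(x, par x) then ι h.choose else 0 with hc0def
  have hc0 : ∀ v : α, v ≠ r → c0 s(v, par v) = ι v := by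
    intro v hv
    have hex : ∃ x, x ≠ r ∧ s(v, par v) = s(x, par x) := ⟨v, hv, rfl⟩
    rw [hc0def]
    simp only [dif_pos hex]
    obtain ⟨hy1, hy2⟩ := hex.choose_spec
    set y := hex.choose
    rcases Sym2.eq_iff.mp hy2 with ⟨h1, _⟩ | ⟨h1, h2⟩
    · rw [h1]
    · exfalso
      have hv' := (hparspec v hv).2
      have hy' := (hparspec y hy1).2
      rw [h2] at hv'
      rw [← h1] at hy'
      omega
  refine ⟨c0, ?_⟩
  have key : ∀ n : ℕ, ∀ u v : α, H.dist r u + H.dist r v ≤ n → ∃ p : H.Walk u v,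
      (p.edges.map c0).Nodup ∧ ∀ e ∈ p.edges, ∃ x, x ≠ r ∧ e = s(x, par x) ∧
        (H.dist r x < H.dist r u ∨ x = u ∨ H.dist r x < H.dist r v ∨ x = v) := by
    intro n
    induction n with
    | zero =>
      intro u v h
      have hu : r = u := (hH.dist_eq_zero_iff).mp (by omega)
      have hv : r = v := (hH.dist_eq_zero_iff).mp (by omega)
      subst hu; subst hv
      exact ⟨Walk.nil, by simp, by simp⟩
    | succ n ih =>
      intro u v hsum
      by_cases huv : u = v
      · subst huv; exact ⟨Walk.nil, by simp, by simp⟩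
      rcases le_total (H.dist r v) (H.dist r u) with hle | hle
      · -- u is farther from the root: step from u to its parent
        have hur : u ≠ r := by
          intro hc
          have h0 : H.dist r u = 0 := by rw [hc]; exact SimpleGraph.dist_self
          have h0' : H.dist r v = 0 := by omega
          have h1 := (hH.dist_eq_zero_iff).mp h0'
          exact huv (hc.trans h1)
        obtain ⟨hadj, hdist⟩ := hparspec u hur
        have hpos : 0 < H.dist r u := by
          rcases Nat.eq_zero_or_pos (H.dist r u) with h0 | h
          · exact absurd ((hH.dist_eq_zero_iff).mp h0).symm hur
          · exact h
        obtain ⟨q, hq1, hq2⟩ := ih (par u) v (by omega)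
        refine ⟨Walk.cons hadj q, ?_, ?_⟩
        · rw [Walk.edges_cons, List.map_cons, List.nodup_cons]
          refine ⟨?_, hq1⟩
          rw [hc0 u hur]
          intro hmem
          rw [List.mem_map] at hmem
          obtain ⟨e, he, hce⟩ := hmem
          obtain ⟨x, hx1, hx2, hx3⟩ := hq2 e he
          rw [hx2, hc0 x hx1] at hce
          have hxu : x = u := hιinj hce
          rcases hx3 with h | h | h | h
          · rw [hxu] at h; omega
          · rw [hxu] at h; rw [← h] at hdist; omega
          · rw [hxu] at h; omega
          · exact huv (hxu.symm.trans h)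
        · intro e he
          rw [Walk.edges_cons, List.mem_cons] at he
          rcases he with rfl | he
          · exact ⟨u, hur, rfl, Or.inr (Or.inl rfl)⟩
          · obtain ⟨x, hx1, hx2, hx3⟩ := hq2 e he
            refine ⟨x, hx1, hx2, ?_⟩
            rcases hx3 with h | h | h | h
            · left; omega
            · left; rw [h]; omega
            · right; right; left; exact h
            · right; right; right; exact h
      · -- v is farther from the root
        have hvr : v ≠ r := by
          intro hc
          have h0 : H.dist r v = 0 := by rw [hc]; exact SimpleGraph.dist_self
          have h0' : H.dist r u = 0 := by omega
          have h1 := (hH.dist_eq_zero_iff).mp h0'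
          exact huv (h1.symm.trans hc.symm)
        obtain ⟨hadj, hdist⟩ := hparspec v hvr
        have hpos : 0 < H.dist r v := by
          rcases Nat.eq_zero_or_pos (H.dist r v) with h0 | h
          · exact absurd ((hH.dist_eq_zero_iff).mp h0).symm hvr
          · exact h
        obtain ⟨q, hq1, hq2⟩ := ih u (par v) (by omega)
        refine ⟨q.concat hadj.symm, ?_, ?_⟩
        · rw [Walk.edges_concat, List.concat_eq_append, List.map_append, List.nodup_append]
          refine ⟨hq1, by simp, ?_⟩
          intro a ha b ha' hab
          rw [← hab] at ha'
          simp only [List.map_cons, List.map_nil, List.mem_singleton] at ha'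
          have hswap : s(par v, v) = s(v, par v) := Sym2.eq_swap
          rw [hswap, hc0 v hvr] at ha'
          rw [List.mem_map] at ha
          obtain ⟨e, he, hce⟩ := ha
          obtain ⟨x, hx1, hx2, hx3⟩ := hq2 e he
          rw [hx2, hc0 x hx1] at hce
          have hxv : x = v := hιinj (hce.trans ha')
          rcases hx3 with h | h | h | h
          · rw [hxv] at h; omega
          · exact huv (h.symm.trans hxv)
          · rw [hxv] at h; omega
          · have hvv : v = par v := hxv.symm.trans h
            rw [← hvv] at hdist; omega
        · intro e he
          rw [Walk.edges_concat, List.concat_eq_append, List.mem_append] at he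
          rcases he with he | he
          · obtain ⟨x, hx1, hx2, hx3⟩ := hq2 e he
            refine ⟨x, hx1, hx2, ?_⟩
            rcases hx3 with h | h | h | h
            · left; exact h
            · right; left; exact h
            · right; right; left; omega
            · right; right; left; rw [h]; omega
          · rw [List.mem_singleton] at he
            refine ⟨v, hvr, by rw [he]; exact Sym2.eq_swap, Or.inr (Or.inr (Or.inr rfl))⟩
  intro u v
  obtain ⟨p, h1, h2⟩ := key (H.dist r u + H.dist r v) u v le_rfl
  refine ⟨p, ?_, h1⟩
  intro e he
  obtain ⟨x, hx, hex, -⟩ := h2 e he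
  rw [hex, hc0 x hx]
  exact hιlt x hx


lemma exists_maxcut_labeling {V : Type*} [Fintype V] (G : SimpleGraph V) (B : Set V) :
    ∃ ℓ : V → Bool, ∀ v ∈ B, (∃ u ∈ B, G.Adj v u) →
      ∃ u ∈ B, G.Adj v u ∧ ℓ u ≠ ℓ v := by
  classical
  let cut : (V → Bool) → ℕ := fun ℓ => ((Finset.univ : Finset (V × V)).filter
      (fun q => q.1 ∈ B ∧ q.2 ∈ B ∧ G.Adj q.1 q.2 ∧ ℓ q.1 ≠ ℓ q.2)).card
  obtain ⟨ℓ, -, hmax⟩ := Finset.exists_max_image (Finset.univ : Finset (V → Bool)) cut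
    ⟨fun _ => true, Finset.mem_univ _⟩
  refine ⟨ℓ, fun v hv h => ?_⟩
  obtain ⟨u0, hu0B, hu0⟩ := h
  by_contra hcon
  push_neg at hcon
  have hall : ∀ u ∈ B, G.Adj v u → ℓ u = ℓ v := by
    intro u h1 h2
    by_contra hne
    exact hne (hcon u h1 h2)
  set ℓ' := Function.update ℓ v (!ℓ v) with hℓ'
  have hlt : cut ℓ < cut ℓ' := by
    apply Finset.card_lt_card
    rw [Finset.ssubset_iff_of_subset]
    · refine ⟨(v, u0), ?_, ?_⟩
      · simp only [Finset.mem_filter, Finset.mem_univ, true_and]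
        refine ⟨hv, hu0B, hu0, ?_⟩
        have h1 : ℓ' v = !ℓ v := Function.update_self v (!ℓ v) ℓ
        have hu0v : u0 ≠ v := fun hc => G.irrefl (hc ▸ hu0)
        have h2 : ℓ' u0 = ℓ u0 := Function.update_of_ne hu0v _ _
        rw [h1, h2, hall u0 hu0B hu0]
        simp
      · simp only [Finset.mem_filter, Finset.mem_univ, true_and]
        intro hc
        exact hc.2.2.2 (hall u0 hu0B hu0).symm
    · intro q hq
      simp only [Finset.mem_filter, Finset.mem_univ, true_and] at hq ⊢
      obtain ⟨h1, h2, h3, h4⟩ := hq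
      refine ⟨h1, h2, h3, ?_⟩
      have hq1 : q.1 ≠ v := by
        intro hc
        exact h4 ((hall q.2 h2 (hc ▸ h3)).trans (congrArg ℓ hc).symm).symm
      have hq2 : q.2 ≠ v := by
        intro hc
        exact h4 ((hall q.1 h1 (hc ▸ h3.symm)).trans (congrArg ℓ hc).symm)
      rw [hℓ', Function.update_of_ne hq1, Function.update_of_ne hq2]
      exact h4
  exact absurd (hmax ℓ' (Finset.mem_univ _)) (not_le.mpr hlt)


lemma nodup_sandwich {β : Type*} (f : β → ℕ) (t : ℕ) (T L1 L2 : List β) (hT : T.Nodup)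
    (hTlt : ∀ x ∈ T, f x < t) (hL : (L1 ++ L2).Nodup) (hge : ∀ x ∈ L1 ++ L2, t ≤ f x) :
    (L1 ++ (T ++ L2)).Nodup := by
  rw [List.nodup_append] at hL
  obtain ⟨h1, h2, h12⟩ := hL
  rw [List.nodup_append, List.nodup_append]
  refine ⟨h1, ⟨hT, h2, ?_⟩, ?_⟩
  · intro a haT b haL2 hab
    rw [← hab] at haL2
    have := hTlt a haT
    have := hge a (List.mem_append_right _ haL2)
    omega
  · intro a haL1 b haTL2 hab
    rw [← hab] at haTL2
    rcases List.mem_append.mp haTL2 with h | h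
    · have := hTlt a h
      have := hge a (List.mem_append_left _ haL1)
      omega
    · exact h12 a haL1 a h rfl

set_option maxHeartbeats 1000000 in
lemma rc_aux {V : Type*} [Fintype V] (G : SimpleGraph V) [DecidableRel G.Adj] (hG : G.Connected)
    (hδ : ∀ v : V, 2 ≤ G.degree v) (D : Finset V)
    (hDconn : (G.induce (↑D : Set V)).Connected)
    (hDdom : ∀ v ∉ D, ∃ u ∈ D, G.Adj u v) :
    ∃ c : Sym2 V → Fin (D.card + 2), ∀ u v : V, ∃ p : G.Walk u v, (p.edges.map c).Nodup := by
  classical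
  haveI : DecidableEq V := Classical.decEq V
  set m := D.card with hmdef
  have hm1 : 1 ≤ m := by
    obtain ⟨v⟩ := hG.nonempty
    by_cases hv : v ∈ D
    · have := Finset.card_pos.mpr ⟨v, hv⟩; omega
    · obtain ⟨u, hu, -⟩ := hDdom v hv
      have := Finset.card_pos.mpr ⟨u, hu⟩; omega
  -- tree coloring inside D
  obtain ⟨c0, hc0⟩ := exists_tree_coloring hDconn
  have hcardD : Fintype.card (↑D : Set V) = m := by simp [hmdef]
  -- the ℕ-valued coloring of D-internal pairs
  set C0 : Sym2 V → ℕ := Sym2.lift ⟨fun a b =>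
      if h : a ∈ D ∧ b ∈ D then c0 s(⟨a, by exact_mod_cast h.1⟩, ⟨b, by exact_mod_cast h.2⟩) else 0,
    by
      intro a b
      dsimp only
      by_cases h : a ∈ D ∧ b ∈ D
      · have h' : b ∈ D ∧ a ∈ D := ⟨h.2, h.1⟩
        rw [dif_pos h, dif_pos h']
        exact congrArg c0 Sym2.eq_swap
      · have h' : ¬(b ∈ D ∧ a ∈ D) := fun hc => h ⟨hc.2, hc.1⟩
        rw [dif_neg h, dif_neg h']⟩ with hC0def
  have hC0 : ∀ (x y : (↑D : Set V)), C0 s(x.1, y.1) = c0 s(x, y) := by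
    intro x y
    have hx : (x : V) ∈ D := by exact_mod_cast x.2
    have hy : (y : V) ∈ D := by exact_mod_cast y.2
    rw [hC0def, Sym2.lift_mk]
    dsimp only
    rw [dif_pos ⟨hx, hy⟩]
  -- mapped tree walks
  have treeW : ∀ a b : V, a ∈ D → b ∈ D → ∃ p : G.Walk a b,
      (∀ e ∈ p.edges, C0 e < m - 1 ∧ ∃ x y, x ∈ D ∧ y ∈ D ∧ e = s(x, y)) ∧
      (p.edges.map C0).Nodup := by
    intro a b ha hb
    have ha' : a ∈ (↑D : Set V) := by exact_mod_cast ha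
    have hb' : b ∈ (↑D : Set V) := by exact_mod_cast hb
    obtain ⟨q, hq1, hq2⟩ := hc0 ⟨a, ha'⟩ ⟨b, hb'⟩
    let f : G.induce (↑D : Set V) →g G := ⟨Subtype.val, fun {x y} h => h⟩
    have hCc0 : ∀ e' ∈ q.edges, C0 (Sym2.map f e') = c0 e' := by
      intro e' he'
      induction e' using Sym2.ind with
      | _ x y =>
        have hmap : Sym2.map f s(x, y) = s(x.1, y.1) := rfl
        rw [hmap]
        exact hC0 x y
    refine ⟨q.map f, ?_, ?_⟩
    · intro e he
      rw [Walk.edges_map, List.mem_map] at he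
      obtain ⟨e', he', rfl⟩ := he
      constructor
      · rw [hCc0 e' he']
        have := hq1 e' he'
        rw [hcardD] at this
        exact this
      · induction e' using Sym2.ind with
        | _ x y =>
          refine ⟨x.1, y.1, by exact_mod_cast x.2, by exact_mod_cast y.2, rfl⟩
    · rw [Walk.edges_map, List.map_map]
      have heq : q.edges.map (C0 ∘ Sym2.map f) = q.edges.map c0 :=
        List.map_congr_left (fun e' he' => hCc0 e' he')
      rw [heq]
      exact hq2
  -- outside-vertex machinery
  set good : V → Prop := fun v => ∃ x y : V, x ∈ D ∧ y ∈ D ∧ x ≠ y ∧ G.Adj v x ∧ G.Adj v y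
    with hgooddef
  set bad : V → Prop := fun v => v ∉ D ∧ ¬ good v with hbaddef
  have hsel' : ∀ v : V, ∃ x y : V, v ∉ D →
      (x ∈ D ∧ G.Adj v x ∧ (good v → y ∈ D ∧ G.Adj v y ∧ x ≠ y)) := by
    intro v
    by_cases hg : good v
    · obtain ⟨x, y, hx, hy, hxy, hax, hay⟩ := hg
      exact ⟨x, y, fun _ => ⟨hx, hax, fun _ => ⟨hy, hay, hxy⟩⟩⟩
    · by_cases hv : v ∈ D
      · exact ⟨v, v, fun h => absurd hv h⟩
      · obtain ⟨u, hu, hadj⟩ := hDdom v hv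
        exact ⟨u, u, fun _ => ⟨hu, hadj.symm, fun h => absurd h hg⟩⟩
  choose d1 d2 hsel using hsel'
  have hbadnbr : ∀ v, bad v → ∃ u, G.Adj v u ∧ u ∉ D := by
    intro v hb
    have h2 : 2 ≤ (G.neighborFinset v).card := by
      rw [card_neighborFinset_eq_degree]; exact hδ v
    obtain ⟨a, ha, b2, hb2, hab⟩ := Finset.one_lt_card.mp h2
    rw [mem_neighborFinset] at ha hb2
    by_cases haD : a ∈ D
    · by_cases hbD : b2 ∈ D
      · exact absurd ⟨a, b2, haD, hbD, hab, ha, hb2⟩ hb.2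
      · exact ⟨b2, hb2, hbD⟩
    · exact ⟨a, ha, haD⟩
  obtain ⟨ℓ, hℓ⟩ := exists_maxcut_labeling G {v | bad v}
  have hsfn' : ∀ v : V, ∃ u : V, bad v →
      (G.Adj v u ∧ u ∉ D ∧ (good u ∨ (bad u ∧ ℓ u ≠ ℓ v))) := by
    intro v
    by_cases hb : bad v
    · by_cases hg : ∃ u, G.Adj v u ∧ u ∉ D ∧ good u
      · obtain ⟨u, h1, h2, h3⟩ := hg
        exact ⟨u, fun _ => ⟨h1, h2, Or.inl h3⟩⟩
      · obtain ⟨u0, hu01, hu02⟩ := hbadnbr v hb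
        have hu0bad : bad u0 := ⟨hu02, fun hgood => hg ⟨u0, hu01, hu02, hgood⟩⟩
        obtain ⟨u, huB, huadj, hune⟩ := hℓ v hb ⟨u0, hu0bad, hu01⟩
        exact ⟨u, fun _ => ⟨huadj, huB.1, Or.inr ⟨huB, hune⟩⟩⟩
    · exact ⟨v, fun h => absurd h hb⟩
  choose sfn hsfn using hsfn'
  -- the special colors
  set Ac : Fin (m + 2) := ⟨m - 1, by omega⟩ with hAc
  set Bc : Fin (m + 2) := ⟨m, by omega⟩ with hBc
  set Cc : Fin (m + 2) := ⟨m + 1, by omega⟩ with hCc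
  set Lcol : V → Fin (m + 2) := fun v => if ℓ v then Ac else Bc with hLcol
  set opc : V → Fin (m + 2) := fun v => if ℓ v then Bc else Ac with hopc
  set pcol : V → Fin (m + 2) := fun v => if good v then Ac else Lcol v with hpcol
  set gcol : V → V → Fin (m + 2) :=
    fun v d => if d = d1 v then pcol v else if d = d2 v then Bc else Cc with hgcol
  set tc : Sym2 V → Fin (m + 2) :=
    fun e => if h : C0 e < m - 1 then ⟨C0 e, by omega⟩ else Cc with htc
  let F : V → V → Fin (m + 2) := fun a b =>
    if a ∈ D then (if b ∈ D then tc s(a, b) else gcol b a)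
    else (if b ∈ D then gcol a b else Cc)
  have hFdef : F = fun a b =>
    if a ∈ D then (if b ∈ D then tc s(a, b) else gcol b a)
    else (if b ∈ D then gcol a b else Cc) := rfl
  have hFsymm : ∀ a b, F a b = F b a := by
    intro a b
    simp only [hFdef]
    by_cases ha : a ∈ D <;> by_cases hb : b ∈ D
    · rw [if_pos ha, if_pos hb, if_pos ha, if_pos hb]
      exact congrArg tc Sym2.eq_swap
    · rw [if_pos ha, if_neg hb, if_neg hb, if_pos ha]
    · rw [if_neg ha, if_pos hb, if_pos hb, if_neg ha]
    · rw [if_neg ha, if_neg hb, if_neg hb, if_neg ha]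
  let c : Sym2 V → Fin (m + 2) := Sym2.lift ⟨F, hFsymm⟩
  have hcdef : c = Sym2.lift ⟨F, hFsymm⟩ := rfl
  have hc : ∀ a b, c s(a, b) = F a b := by
    intro a b; rw [hcdef, Sym2.lift_mk]
  -- basic value facts
  have hpAB : ∀ v, pcol v = Ac ∨ pcol v = Bc := by
    intro v
    simp only [hpcol, hLcol]
    by_cases h : good v
    · rw [if_pos h]; left; rfl
    · rw [if_neg h]
      by_cases h2 : ℓ v
      · rw [if_pos h2]; left; rfl
      · rw [if_neg h2]; right; rfl
  have hoAB : ∀ v, opc v = Ac ∨ opc v = Bc := by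
    intro v
    simp only [hopc]
    by_cases h2 : ℓ v
    · rw [if_pos h2]; right; rfl
    · rw [if_neg h2]; left; rfl
    -- coloring evaluation facts
  have hcDD : ∀ a b : V, a ∈ D → b ∈ D → c s(a, b) = tc s(a, b) := by
    intro a b ha hb
    rw [hc a b]
    simp only [hFdef]
    rw [if_pos ha, if_pos hb]
  have hcOD : ∀ v d : V, v ∉ D → d ∈ D → c s(v, d) = gcol v d := by
    intro v d hv hd
    rw [hc v d]
    simp only [hFdef]
    rw [if_neg hv, if_pos hd]
  have hcOO : ∀ u v : V, u ∉ D → v ∉ D → c s(u, v) = Cc := by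
    intro u v hu hv
    rw [hc u v]
    simp only [hFdef]
    rw [if_neg hu, if_neg hv]
  -- numeric facts about the special colors
  have hAv : (Ac : ℕ) = m - 1 := by rw [hAc]
  have hBv : (Bc : ℕ) = m := by rw [hBc]
  have hCv : (Cc : ℕ) = m + 1 := by rw [hCc]
  have hABne : Ac ≠ Bc := by
    intro h
    have := congrArg (fun x : Fin (m + 2) => (x : ℕ)) h
    simp only [hAv, hBv] at this
    omega
  have hACne : Ac ≠ Cc := by
    intro h
    have := congrArg (fun x : Fin (m + 2) => (x : ℕ)) h
    simp only [hAv, hCv] at this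
    omega
  have hBCne : Bc ≠ Cc := by
    intro h
    have := congrArg (fun x : Fin (m + 2) => (x : ℕ)) h
    simp only [hBv, hCv] at this
    omega
  have hgeP : ∀ w, m - 1 ≤ ((pcol w : Fin (m + 2)) : ℕ) := by
    intro w
    rcases hpAB w with h | h
    · rw [h, hAv]
    · rw [h, hBv]; omega
  have hgeO : ∀ w, m - 1 ≤ ((opc w : Fin (m + 2)) : ℕ) := by
    intro w
    rcases hoAB w with h | h
    · rw [h, hAv]
    · rw [h, hBv]; omega
  have hgeC : m - 1 ≤ ((Cc : Fin (m + 2)) : ℕ) := by rw [hCv]; omega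
  have hPCne : ∀ w, pcol w ≠ Cc := by
    intro w
    rcases hpAB w with h | h <;> rw [h]
    · exact hACne
    · exact hBCne
  have hOCne : ∀ w, opc w ≠ Cc := by
    intro w
    rcases hoAB w with h | h <;> rw [h]
    · exact hACne
    · exact hBCne
  have hLopc : ∀ u v : V, ℓ u ≠ ℓ v → Lcol u = opc v := by
    intro u v h
    simp only [hLcol, hopc]
    cases hu : ℓ u <;> cases hv : ℓ v
    · exact absurd (hu.trans hv.symm) h
    · rw [if_neg Bool.false_ne_true, if_pos (rfl : true = true)]
    · rw [if_pos (rfl : true = true), if_neg Bool.false_ne_true]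
    · exact absurd (hu.trans hv.symm) h
  have hLOne : ∀ w, Lcol w ≠ opc w := by
    intro w
    simp only [hLcol, hopc]
    cases hw : ℓ w
    · rw [if_neg Bool.false_ne_true, if_neg Bool.false_ne_true]
      exact fun h => hABne h.symm
    · rw [if_pos (rfl : true = true), if_pos (rfl : true = true)]
      exact hABne
  -- tree walks with the final coloring
  have treeWc : ∀ a b : V, a ∈ D → b ∈ D → ∃ p : G.Walk a b,
      (p.edges.map c).Nodup ∧ ∀ x ∈ p.edges.map c, (x : ℕ) < m - 1 := by
    intro a b ha hb
    obtain ⟨p, hp1, hp2⟩ := treeW a b ha hb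
    have hval : ∀ e ∈ p.edges, ((c e : Fin (m + 2)) : ℕ) = C0 e ∧ C0 e < m - 1 := by
      intro e he
      obtain ⟨hlt, x, y, hx, hy, rfl⟩ := hp1 e he
      refine ⟨?_, hlt⟩
      rw [hcDD x y hx hy]
      simp only [htc]
      rw [dif_pos hlt]
    refine ⟨p, ?_, ?_⟩
    · have hedges : p.edges.Nodup := hp2.of_map
      apply hedges.map_on
      intro x hx y hy hxy
      have h1 := hval x hx
      have h2 := hval y hy
      have hC : C0 x = C0 y := by rw [← h1.1, ← h2.1, hxy]
      exact List.inj_on_of_nodup_map hp2 hx hy hC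
    · intro x hx
      rw [List.mem_map] at hx
      obtain ⟨e, he, rfl⟩ := hx
      have h := hval e he
      rw [h.1]
      exact h.2
  -- connector walks
  have hprim : ∀ v, v ∉ D → ∃ d, d ∈ D ∧ ∃ p : G.Walk v d, p.edges.map c = [pcol v] := by
    intro v hv
    obtain ⟨h1, h2, -⟩ := hsel v hv
    refine ⟨d1 v, h1, Walk.cons h2 Walk.nil, ?_⟩
    simp only [Walk.edges_cons, Walk.edges_nil, List.map_cons, List.map_nil]
    rw [hcOD v (d1 v) hv h1]
    simp only [hgcol]
    rw [if_true]
  have hsecg : ∀ v, v ∉ D → good v → ∃ d, d ∈ D ∧ ∃ p : G.Walk v d,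
      p.edges.map c = [Bc] := by
    intro v hv hg
    obtain ⟨h1, h2, h3⟩ := hsel v hv
    obtain ⟨h4, h5, h6⟩ := h3 hg
    refine ⟨d2 v, h4, Walk.cons h5 Walk.nil, ?_⟩
    simp only [Walk.edges_cons, Walk.edges_nil, List.map_cons, List.map_nil]
    rw [hcOD v (d2 v) hv h4]
    simp only [hgcol]
    rw [if_neg (Ne.symm h6), if_true]
  have hsecb : ∀ v, bad v → ∃ d, d ∈ D ∧ ∃ p : G.Walk v d,
      p.edges.map c = [Cc, opc v] := by
    intro v hb
    obtain ⟨hadj, huD, hcase⟩ := hsfn v hb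
    have hvD : v ∉ D := hb.1
    have hfirst : c s(v, sfn v) = Cc := hcOO v (sfn v) hvD huD
    rcases hcase with hgu | ⟨hbu, hne⟩
    · obtain ⟨h1, h2, h3⟩ := hsel (sfn v) huD
      obtain ⟨h4, h5, h6⟩ := h3 hgu
      by_cases hlv : ℓ v
      · refine ⟨d2 (sfn v), h4, Walk.cons hadj (Walk.cons h5 Walk.nil), ?_⟩
        simp only [Walk.edges_cons, Walk.edges_nil, List.map_cons, List.map_nil]
        rw [hfirst, hcOD (sfn v) (d2 (sfn v)) huD h4]
        simp only [hgcol]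
        rw [if_neg (Ne.symm h6), if_true]
        simp only [hopc]
        rw [if_pos hlv]
      · refine ⟨d1 (sfn v), h1, Walk.cons hadj (Walk.cons h2 Walk.nil), ?_⟩
        simp only [Walk.edges_cons, Walk.edges_nil, List.map_cons, List.map_nil]
        rw [hfirst, hcOD (sfn v) (d1 (sfn v)) huD h1]
        simp only [hgcol]
        rw [if_true]
        simp only [hpcol, hopc]
        rw [if_pos hgu, if_neg hlv]
    · obtain ⟨h1, h2, -⟩ := hsel (sfn v) huD
      refine ⟨d1 (sfn v), h1, Walk.cons hadj (Walk.cons h2 Walk.nil), ?_⟩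
      simp only [Walk.edges_cons, Walk.edges_nil, List.map_cons, List.map_nil]
      rw [hfirst, hcOD (sfn v) (d1 (sfn v)) huD h1]
      simp only [hgcol]
      rw [if_true]
      have hpu : pcol (sfn v) = Lcol (sfn v) := by
        simp only [hpcol]
        rw [if_neg hbu.2]
      rw [hpu, hLopc (sfn v) v hne]
  -- assemble
  refine ⟨c, ?_⟩
  intro u v
  by_cases hu : u ∈ D <;> by_cases hv : v ∈ D
  · obtain ⟨p, h1, -⟩ := treeWc u v hu hv
    exact ⟨p, h1⟩
  · -- u ∈ D, v ∉ D
    obtain ⟨d, hd, q, hq⟩ := hprim v hv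
    obtain ⟨t, ht1, ht2⟩ := treeWc u d hu hd
    refine ⟨t.append q.reverse, ?_⟩
    rw [Walk.edges_append, List.map_append, Walk.edges_reverse, List.map_reverse, hq]
    have h := nodup_sandwich (fun x : Fin (m + 2) => (x : ℕ)) (m - 1)
      (t.edges.map c) [] ([pcol v].reverse) ht1 ht2 (by simp)
      (by
        intro x hx
        simp only [List.nil_append, List.reverse_singleton, List.mem_singleton] at hx
        subst hx
        exact hgeP v)
    simpa using h
  · -- u ∉ D, v ∈ D
    obtain ⟨d, hd, q, hq⟩ := hprim u hu
    obtain ⟨t, ht1, ht2⟩ := treeWc d v hd hv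
    refine ⟨q.append t, ?_⟩
    rw [Walk.edges_append, List.map_append, hq]
    have h := nodup_sandwich (fun x : Fin (m + 2) => (x : ℕ)) (m - 1)
      (t.edges.map c) [pcol u] [] ht1 ht2 (by simp)
      (by
        intro x hx
        simp only [List.append_nil, List.mem_singleton] at hx
        subst hx
        exact hgeP u)
    simpa using h
  · -- both outside
    obtain ⟨du, hdu, qu, hqu⟩ := hprim u hu
    by_cases hpp : pcol u = pcol v
    · by_cases hgv : good v
      · obtain ⟨dv, hdv, qv, hqv⟩ := hsecg v hv hgv
        obtain ⟨t, ht1, ht2⟩ := treeWc du dv hdu hdv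
        refine ⟨qu.append (t.append qv.reverse), ?_⟩
        rw [Walk.edges_append, Walk.edges_append, Walk.edges_reverse, List.map_append,
          List.map_append, List.map_reverse, hqu, hqv]
        have hpvA : pcol v = Ac := by
          simp only [hpcol]
          rw [if_pos hgv]
        apply nodup_sandwich (fun x : Fin (m + 2) => (x : ℕ)) (m - 1) _ _ _ ht1 ht2
        · simp only [List.reverse_singleton]
          have : pcol u ≠ Bc := by rw [hpp, hpvA]; exact hABne
          simp [this]
        · intro x hx
          simp only [List.reverse_singleton, List.mem_append, List.mem_singleton] at hx
          rcases hx with rfl | rfl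
          · exact hgeP u
          · rw [hBv]; omega
      · have hbv : bad v := ⟨hv, hgv⟩
        obtain ⟨dv, hdv, qv, hqv⟩ := hsecb v hbv
        obtain ⟨t, ht1, ht2⟩ := treeWc du dv hdu hdv
        refine ⟨qu.append (t.append qv.reverse), ?_⟩
        rw [Walk.edges_append, Walk.edges_append, Walk.edges_reverse, List.map_append,
          List.map_append, List.map_reverse, hqu, hqv]
        have hrev : ([Cc, opc v]).reverse = [opc v, Cc] := by simp
        rw [hrev]
        have hpvL : pcol v = Lcol v := by
          simp only [hpcol]
          rw [if_neg hgv]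
        apply nodup_sandwich (fun x : Fin (m + 2) => (x : ℕ)) (m - 1) _ _ _ ht1 ht2
        · have h1 : pcol u ≠ opc v := by
            rw [hpp, hpvL]
            exact hLOne v
          have h2 : pcol u ≠ Cc := hPCne u
          have h3 : opc v ≠ Cc := hOCne v
          simp [h1, h2, h3]
        · intro x hx
          simp only [List.mem_append, List.mem_cons, List.mem_singleton,
            List.not_mem_nil, or_false] at hx
          rcases hx with rfl | rfl | rfl
          · exact hgeP u
          · exact hgeO v
          · exact hgeC
    · obtain ⟨dv, hdv, qv, hqv⟩ := hprim v hv
      obtain ⟨t, ht1, ht2⟩ := treeWc du dv hdu hdv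
      refine ⟨qu.append (t.append qv.reverse), ?_⟩
      rw [Walk.edges_append, Walk.edges_append, Walk.edges_reverse, List.map_append,
        List.map_append, List.map_reverse, hqu, hqv]
      apply nodup_sandwich (fun x : Fin (m + 2) => (x : ℕ)) (m - 1) _ _ _ ht1 ht2
      · simp only [List.reverse_singleton]
        simp [hpp]
      · intro x hx
        simp only [List.reverse_singleton, List.mem_append, List.mem_singleton] at hx
        rcases hx with rfl | rfl
        · exact hgeP u
        · exact hgeP v

/-- Let `G` be connected with minimum degree at least 2, `D` a connected
dominating set, and `Y ⊆ D` an independent set with `|D| = 2|Y| − 1`. If some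
vertex `w ∉ D` has no neighbor in `Y`, then `rc(G) ≤ 2α(G) − 1`. -/
theorem rc_le_of_outside_vertex_no_neighbor {V : Type*} [Fintype V]
    (G : SimpleGraph V) [DecidableRel G.Adj] (hG : G.Connected)
    (hδ : ∀ v : V, 2 ≤ G.degree v)
    (D Y : Finset V) (hYD : Y ⊆ D)
    (hDconn : (G.induce (↑D : Set V)).Connected)
    (hDdom : ∀ v ∉ D, ∃ u ∈ D, G.Adj u v)
    (hYindep : (↑Y : Set V).Pairwise fun a b => ¬ G.Adj a b)
    (hcard : D.card = 2 * Y.card - 1)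
    (hw : ∃ w : V, w ∉ D ∧ ∀ y ∈ Y, ¬ G.Adj w y) :
    rc G ≤ 2 * _root_.indepNum G - 1 := by
  classical
  obtain ⟨w, hwD, hwY⟩ := hw
  have hY1 : 1 ≤ Y.card := by
    by_contra h
    push_neg at h
    have hY0 : Y.card = 0 := by omega
    have hD0 : D.card = 0 := by rw [hcard, hY0]
    have hDe : D = ∅ := Finset.card_eq_zero.mp hD0
    obtain ⟨v⟩ := hG.nonempty
    have hv : v ∉ D := by rw [hDe]; exact Finset.notMem_empty v
    obtain ⟨u, hu, -⟩ := hDdom v hv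
    rw [hDe] at hu
    exact absurd hu (Finset.notMem_empty u)
  have hwY' : w ∉ Y := fun h => hwD (hYD h)
  have hmem : (Y.card + 1) ∈ {n | ∃ s : Finset V, s.card = n ∧
      (↑s : Set V).Pairwise fun a b => ¬ G.Adj a b} := by
    refine ⟨insert w Y, ?_, ?_⟩
    · rw [Finset.card_insert_of_notMem hwY']
    · intro a ha b hb hab
      simp only [Finset.coe_insert, Set.mem_insert_iff, Finset.mem_coe] at ha hb
      rcases ha with rfl | ha
      · rcases hb with rfl | hb
        · exact absurd rfl hab
        · exact hwY b hb
      · rcases hb with rfl | hb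
        · intro hadj
          exact hwY a ha hadj.symm
        · exact hYindep (by exact_mod_cast ha) (by exact_mod_cast hb) hab
  have hbdd : BddAbove {n | ∃ s : Finset V, s.card = n ∧
      (↑s : Set V).Pairwise fun a b => ¬ G.Adj a b} := by
    refine ⟨Fintype.card V, ?_⟩
    rintro n ⟨s, rfl, -⟩
    exact Finset.card_le_univ s
  have hind : Y.card + 1 ≤ _root_.indepNum G := le_csSup hbdd hmem
  obtain ⟨c, hcw⟩ := rc_aux G hG hδ D hDconn hDdom
  have hrcw : RainbowConnectedWith G c := by
    intro u v
    obtain ⟨p, hp⟩ := hcw u v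
    exact exists_rainbow_path_of_walk c p hp
  have hrc : rc G ≤ D.card + 2 := Nat.sInf_le ⟨c, hrcw⟩
  omega
end

section
/- Let G' be a connected graph on n ≥ 3 vertices with exactly n edges (i.e., G' is a connected unicyclic graph, obtained from a spanning tree T with e(T) = n − 1 edges by adding one extra edge). Then rc(G') ≤ e(T) − 1 = n − 2. -/
open SimpleGraph

section AuxLemmas

variable {V : Type*}

lemma del_reach_of_walk {G : SimpleGraph V} {a b : V}
    (hr : (G \ fromEdgeSet {s(a, b)}).Reachable a b) :
    ∀ {u w : V}, G.Walk u w → (G \ fromEdgeSet {s(a, b)}).Reachable u w := by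
  intro u w p
  induction p with
  | nil => exact Reachable.refl _
  | @cons u' v' w' h p ih =>
    refine Reachable.trans ?_ ih
    by_cases he : s(u', v') = s(a, b)
    · rw [Sym2.eq_iff] at he
      rcases he with ⟨rfl, rfl⟩ | ⟨rfl, rfl⟩
      · exact hr
      · exact hr.symm
    · refine Adj.reachable ?_
      rw [sdiff_adj, fromEdgeSet_adj]
      exact ⟨h, fun hc => he (by simpa using hc.1)⟩

lemma del_connected {G : SimpleGraph V} {a b : V} (hG : G.Connected)
    (hr : (G \ fromEdgeSet {s(a, b)}).Reachable a b) :
    (G \ fromEdgeSet {s(a, b)}).Connected := by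
  have hne := hG.nonempty
  refine Connected.mk fun u w => ?_
  obtain ⟨p⟩ := hG.preconnected u w
  exact del_reach_of_walk hr p

lemma del_cycle_connected {G : SimpleGraph V} (hG : G.Connected) {v0 : V}
    {d : G.Walk v0 v0} (hd : d.IsCycle) {f : Sym2 V} (hf : f ∈ d.edges) :
    (G \ fromEdgeSet {f}).Connected := by
  induction f using Sym2.ind with
  | _ a b =>
    exact del_connected hG
      (adj_and_reachable_delete_edges_iff_exists_cycle.2 ⟨v0, d, hd, hf⟩).2

lemma del_edgeSet {G : SimpleGraph V} {f : Sym2 V} :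
    (G \ fromEdgeSet {f}).edgeSet = G.edgeSet \ {f} := by
  rw [edgeSet_sdiff, edgeSet_fromEdgeSet, edgeSet_sdiff_sdiff_isDiag]

lemma del_ncard [Fintype V] {G : SimpleGraph V} {f : Sym2 V} (hf : f ∈ G.edgeSet) :
    (G \ fromEdgeSet {f}).edgeSet.ncard = G.edgeSet.ncard - 1 := by
  rw [del_edgeSet, Set.ncard_diff_singleton_of_mem hf]

lemma card_V_le_ncard_edges [Fintype V] :
    ∀ (k : ℕ) (H : SimpleGraph V), H.Connected →
      H.edgeSet.ncard = k → Fintype.card V ≤ k + 1 := by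
  classical
  intro k
  induction k using Nat.strong_induction_on with
  | _ k ih =>
    intro H hH hk
    by_cases ha : H.IsAcyclic
    · have h1 := IsTree.card_edgeFinset (G := H) ⟨hH, ha⟩
      rw [Set.ncard_eq_toFinset_card'] at hk
      have e1 : H.edgeFinset.card = Fintype.card H.edgeSet := edgeFinset_card
      have e2 : H.edgeSet.toFinset.card = Fintype.card H.edgeSet := Set.toFinset_card _
      omega
    · rw [IsAcyclic] at ha
      push_neg at ha
      obtain ⟨v0, d, hd⟩ := ha
      have hne : d.edges ≠ [] := by
        cases d with
        | nil => exact absurd rfl hd.ne_nil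
        | cons h q => simp
      obtain ⟨f, hf⟩ := List.exists_mem_of_ne_nil _ hne
      have hconn' := del_cycle_connected hH hd hf
      have hfe : f ∈ H.edgeSet := d.edges_subset_edgeSet hf
      have hcd := del_ncard hfe
      have hk1 : 1 ≤ k := by
        have : 0 < H.edgeSet.ncard := by
          rw [Set.ncard_pos (Set.toFinite _)]
          exact ⟨f, hfe⟩
        omega
      have := ih (k - 1) (by omega) _ hconn' (by omega)
      omega

lemma glue_path {G' T : SimpleGraph V} (hle : T ≤ G')
    {u a b w : V} (hab : G'.Adj a b)
    {r : T.Walk u a} {mm : T.Walk a b} {s : T.Walk b w}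
    (hp : (r.append (mm.append s)).IsPath) :
    ∃ w' : G'.Walk u w, w'.IsPath ∧ w'.edges = r.edges ++ s(a, b) :: s.edges := by
  have hrs : ∀ f ∈ r.edges, f ∈ G'.edgeSet :=
    fun f hf => edgeSet_mono hle (r.edges_subset_edgeSet hf)
  have hss : ∀ f ∈ s.edges, f ∈ G'.edgeSet :=
    fun f hf => edgeSet_mono hle (s.edges_subset_edgeSet hf)
  refine ⟨(r.transfer G' hrs).append (Walk.cons hab (s.transfer G' hss)), ?_, ?_⟩
  · have hsup : (r.append (mm.append s)).support
        = r.support ++ (mm.support.tail ++ s.support.tail) := by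
      rw [Walk.support_append, Walk.support_append,
        List.tail_append_of_ne_nil (Walk.support_ne_nil _)]
    have hnd : (r.support ++ (mm.support.tail ++ s.support.tail)).Nodup := by
      rw [← hsup]; exact hp.support_nodup
    rw [List.nodup_append] at hnd
    obtain ⟨hndr, hndms, hdisj⟩ := hnd
    have hbt : b ∈ mm.support.tail := by
      have hbm : b ∈ mm.support := Walk.end_mem_support mm
      rw [mm.support_eq_cons, List.mem_cons] at hbm
      rcases hbm with hbm | hbm
      · exact absurd hbm.symm hab.ne
      · exact hbm
    have hsps : s.IsPath := (hp.of_append_right).of_append_right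
    rw [Walk.isPath_def, Walk.support_append, Walk.support_cons, List.tail_cons,
      Walk.support_transfer, Walk.support_transfer]
    rw [List.nodup_append]
    refine ⟨hndr, hsps.support_nodup, ?_⟩
    intro z hzr z' hzs
    rw [s.support_eq_cons, List.mem_cons] at hzs
    rcases hzs with rfl | hzs
    · exact hdisj _ hzr _ (List.mem_append_left _ hbt)
    · exact hdisj _ hzr _ (List.mem_append_right _ hzs)
  · rw [Walk.edges_append, Walk.edges_cons, Walk.edges_transfer, Walk.edges_transfer]

lemma rainbow_aux {G' T : SimpleGraph V} (hle : T ≤ G') {k : ℕ}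
    {e e1 e2 : Sym2 V} (hTe : T.edgeSet = G'.edgeSet \ {e})
    {col : Sym2 V → Fin k}
    (hP : ∀ a ∈ G'.edgeSet, ∀ b ∈ G'.edgeSet, col a = col b →
        a = b ∨ ((a = e ∨ a = e1 ∨ a = e2) ∧ (b = e ∨ b = e1 ∨ b = e2)))
    {u a b w : V} {r : T.Walk u a} {m : T.Walk a b} {s : T.Walk b w}
    (hab : G'.Adj a b) (heab : s(a, b) = e)
    (hp : (r.append (m.append s)).IsPath)
    (he1m : e1 ∈ m.edges) (he2m : e2 ∈ m.edges) :
    ∃ p : G'.Walk u w, p.IsPath ∧ (p.edges.map col).Nodup := by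
  obtain ⟨w', hw'path, hw'edges⟩ := glue_path hle hab hp
  refine ⟨w', hw'path, ?_⟩
  have hnd : (r.edges ++ s(a, b) :: s.edges).Nodup := by
    rw [← hw'edges]; exact hw'path.isTrail.edges_nodup
  rw [hw'edges]
  refine List.Nodup.map_on ?_ hnd
  have hpn := hp.isTrail.edges_nodup
  rw [Walk.edges_append, Walk.edges_append, List.nodup_append, List.nodup_append] at hpn
  obtain ⟨-, ⟨-, -, hdm⟩, hdt⟩ := hpn
  have hmem : ∀ f ∈ r.edges ++ s(a, b) :: s.edges,
      f ∈ G'.edgeSet ∧ (f = e ∨ (f ≠ e ∧ f ≠ e1 ∧ f ≠ e2)) := by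
    intro f hf
    rw [List.mem_append, List.mem_cons] at hf
    rcases hf with hf | hf | hf
    · have hT' : f ∈ T.edgeSet := r.edges_subset_edgeSet hf
      rw [hTe] at hT'
      refine ⟨hT'.1, Or.inr ⟨by simpa using hT'.2, ?_, ?_⟩⟩
      · rintro rfl; exact hdt _ hf _ (List.mem_append_left _ he1m) rfl
      · rintro rfl; exact hdt _ hf _ (List.mem_append_left _ he2m) rfl
    · subst hf; exact ⟨hab, Or.inl heab⟩
    · have hT' : f ∈ T.edgeSet := s.edges_subset_edgeSet hf
      rw [hTe] at hT'
      refine ⟨hT'.1, Or.inr ⟨by simpa using hT'.2, ?_, ?_⟩⟩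
      · rintro rfl; exact hdm _ he1m _ hf rfl
      · rintro rfl; exact hdm _ he2m _ hf rfl
  intro f hf g hg hfg
  obtain ⟨hfE, hftri⟩ := hmem f hf
  obtain ⟨hgE, hgtri⟩ := hmem g hg
  rcases hP f hfE g hgE hfg with h | ⟨hf3, hg3⟩
  · exact h
  · have hfe : f = e := by tauto
    have hge : g = e := by tauto
    rw [hfe, hge]

end AuxLemmas
/-- A connected unicyclic graph on `n ≥ 3` vertices (`n` vertices and `n`
edges) has rainbow connection number at most `n − 2`. -/
theorem rc_unicyclic_le {V : Type*} [Fintype V] (G' : SimpleGraph V)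
    [DecidableRel G'.Adj] (n : ℕ) (hn : 3 ≤ n)
    (hcard : Fintype.card V = n) (hedges : G'.edgeFinset.card = n)
    (hconn : G'.Connected) :
    rc G' ≤ n - 2 := by
  classical
  have hnc : G'.edgeSet.ncard = n := by
    rw [Set.ncard_eq_toFinset_card']
    have e1 : G'.edgeFinset.card = Fintype.card G'.edgeSet := edgeFinset_card
    have e2 : G'.edgeSet.toFinset.card = Fintype.card G'.edgeSet := Set.toFinset_card _
    omega
  have hna : ¬ G'.IsAcyclic := by
    intro ha
    have h1 := IsTree.card_edgeFinset (G := G') ⟨hconn, ha⟩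
    omega
  rw [IsAcyclic] at hna
  push_neg at hna
  obtain ⟨v, c0, hcyc⟩ := hna
  have h3 := hcyc.three_le_length
  cases c0 with
  | nil => exact absurd rfl hcyc.ne_nil
  | @cons _ x _ hadj q =>
    rw [Walk.length_cons] at h3
    have hc0 := hcyc
    rw [Walk.cons_isCycle_iff] at hc0
    obtain ⟨hqp, heq⟩ := hc0
    set e : Sym2 V := s(v, x) with he_def
    set T : SimpleGraph V := G' \ fromEdgeSet {e} with hT_def
    have hle : T ≤ G' := sdiff_le
    have hTe : T.edgeSet = G'.edgeSet \ {e} := del_edgeSet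
    have hTconn : T.Connected :=
      del_connected hconn
        (adj_and_reachable_delete_edges_iff_exists_cycle.2
          ⟨v, Walk.cons hadj q, hcyc, by simp⟩).2
    have heE : e ∈ G'.edgeSet := hadj
    have hTnc : T.edgeSet.ncard = n - 1 := by
      have hdel := del_ncard (G := G') (f := e) heE
      rw [← hT_def] at hdel
      omega
    have hTacyc : T.IsAcyclic := by
      intro a d hd
      have hne : d.edges ≠ [] := by
        cases d with
        | nil => exact absurd rfl hd.ne_nil
        | cons h q' => simp
      obtain ⟨f, hf⟩ := List.exists_mem_of_ne_nil _ hne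
      have hconn2 := del_cycle_connected hTconn hd hf
      have hfe : f ∈ T.edgeSet := d.edges_subset_edgeSet hf
      have hnc2 := del_ncard hfe
      have hb := card_V_le_ncard_edges ((T \ fromEdgeSet {f}).edgeSet.ncard) _ hconn2 rfl
      omega
    have hT : T.IsTree := ⟨hTconn, hTacyc⟩
    -- destructure q to get its first edge
    obtain ⟨y1, h1, q1, rfl⟩ :
        ∃ (y1 : V) (h1 : G'.Adj x y1) (q1 : G'.Walk y1 v), q = Walk.cons h1 q1 := by
      cases q with
      | nil => rw [Walk.length_nil] at h3; omega
      | cons h1 q1 => exact ⟨_, h1, q1, rfl⟩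
    have he1q : s(x, y1) ∈ (Walk.cons h1 q1).edges := by simp
    -- last edge
    obtain ⟨y2, h2, he2q⟩ :
        ∃ (y2 : V), G'.Adj v y2 ∧ s(v, y2) ∈ (Walk.cons h1 q1).edges := by
      cases hrev : (Walk.cons h1 q1).reverse with
      | nil =>
        have hlen := congrArg Walk.length hrev
        rw [Walk.length_reverse, Walk.length_nil, Walk.length_cons] at hlen
        omega
      | @cons _ y2 _ h2 q2 =>
        refine ⟨y2, h2, ?_⟩
        have hEd := congrArg Walk.edges hrev
        rw [Walk.edges_reverse] at hEd
        have hmm : s(v, y2) ∈ (Walk.cons h1 q1).edges.reverse := by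
          rw [hEd]; simp
        rwa [List.mem_reverse] at hmm
    have hxv : x ≠ v := hadj.ne'
    have he1ne : s(x, y1) ≠ e := fun h => heq (h ▸ he1q)
    have he2ne : s(v, y2) ≠ e := fun h => heq (h ▸ he2q)
    have hne12 : s(x, y1) ≠ s(v, y2) := by
      intro hteq
      rw [Sym2.eq_iff] at hteq
      rcases hteq with ⟨h1', h2'⟩ | ⟨h1', h2'⟩
      · exact hxv h1'
      · subst h2'
        rw [Walk.cons_isPath_iff] at hqp
        have hnil := Walk.isPath_iff_eq_nil.1 hqp.1
        subst hnil
        rw [Walk.length_cons, Walk.length_nil] at h3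
        omega
    -- q as a walk in T
    have hqe : ∀ f ∈ (Walk.cons h1 q1).edges, f ∈ T.edgeSet := by
      intro f hf
      rw [hTe]
      exact ⟨(Walk.cons h1 q1).edges_subset_edgeSet hf, fun hfe => heq (hfe ▸ hf)⟩
    set qT := (Walk.cons h1 q1).transfer T hqe with hqT_def
    have hqTpath : qT.IsPath := hqp.transfer hqe
    -- the coloring
    have heEF : e ∈ G'.edgeFinset := mem_edgeFinset.2 heE
    have he1EF : s(x, y1) ∈ G'.edgeFinset := mem_edgeFinset.2 h1
    have he2EF : s(v, y2) ∈ G'.edgeFinset := mem_edgeFinset.2 h2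
    set S : Finset (Sym2 V) :=
      ((G'.edgeFinset.erase e).erase s(x, y1)).erase s(v, y2) with hS_def
    have hm1 : s(x, y1) ∈ G'.edgeFinset.erase e := Finset.mem_erase.2 ⟨he1ne, he1EF⟩
    have hm2 : s(v, y2) ∈ (G'.edgeFinset.erase e).erase s(x, y1) :=
      Finset.mem_erase.2 ⟨Ne.symm hne12, Finset.mem_erase.2 ⟨he2ne, he2EF⟩⟩
    have hScard : S.card = n - 3 := by
      rw [hS_def, Finset.card_erase_of_mem hm2, Finset.card_erase_of_mem hm1,
        Finset.card_erase_of_mem heEF, hedges]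
      omega
    have hn2pos : 0 < n - 2 := by omega
    set col : Sym2 V → Fin (n - 2) := fun a =>
      if h : a ∈ S then
        ⟨(S.equivFin ⟨a, h⟩).val + 1, by
          have hlt := (S.equivFin ⟨a, h⟩).isLt
          omega⟩
      else ⟨0, hn2pos⟩ with hcol_def
    have hcolS : ∀ a (h : a ∈ S), (col a).val = (S.equivFin ⟨a, h⟩).val + 1 := by
      intro a h
      simp only [hcol_def]
      rw [dif_pos h]
    have hcolN : ∀ a, a ∉ S → (col a).val = 0 := by
      intro a h
      simp only [hcol_def]
      rw [dif_neg h]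
    have hnotS : ∀ a ∈ G'.edgeSet, a ∉ S → (a = e ∨ a = s(x, y1) ∨ a = s(v, y2)) := by
      intro a ha haS
      have haEF : a ∈ G'.edgeFinset := mem_edgeFinset.2 ha
      simp only [hS_def, Finset.mem_erase] at haS
      by_contra hcon
      push_neg at hcon
      exact haS ⟨hcon.2.2, hcon.2.1, hcon.1, haEF⟩
    have hP : ∀ a ∈ G'.edgeSet, ∀ b ∈ G'.edgeSet, col a = col b →
        a = b ∨ ((a = e ∨ a = s(x, y1) ∨ a = s(v, y2)) ∧
          (b = e ∨ b = s(x, y1) ∨ b = s(v, y2))) := by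
      intro a ha b hb hab
      by_cases haS : a ∈ S <;> by_cases hbS : b ∈ S
      · left
        have hva := hcolS a haS
        have hvb := hcolS b hbS
        have hvv := congrArg Fin.val hab
        have hfin : S.equivFin ⟨a, haS⟩ = S.equivFin ⟨b, hbS⟩ := by
          apply Fin.ext; omega
        have := S.equivFin.injective hfin
        exact congrArg Subtype.val this
      · exfalso
        have hva := hcolS a haS
        have hvb := hcolN b hbS
        have hvv := congrArg Fin.val hab
        omega
      · exfalso
        have hva := hcolN a haS
        have hvb := hcolS b hbS
        have hvv := congrArg Fin.val hab
        omega
      · exact Or.inr ⟨hnotS a ha haS, hnotS b hb hbS⟩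
    -- rainbow connectivity
    have key : (n - 2) ∈ {k | ∃ c : Sym2 V → Fin k, RainbowConnectedWith G' c} := by
      refine ⟨col, fun u w => ?_⟩
      obtain ⟨p, hp, hpu⟩ := hT.existsUnique_path u w
      by_cases hboth : s(x, y1) ∈ p.edges ∧ s(v, y2) ∈ p.edges
      · -- hard case
        obtain ⟨he1p, he2p⟩ := hboth
        have hxs : x ∈ p.support := p.fst_mem_support_of_mem_edges he1p
        have hvs : v ∈ p.support := p.fst_mem_support_of_mem_edges he2p
        by_cases hvd : v ∈ (p.dropUntil x hxs).support
        · -- v after x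
          have hmpath : ((p.dropUntil x hxs).takeUntil v hvd).IsPath :=
            (hp.dropUntil hxs).takeUntil hvd
          have hmeq : (p.dropUntil x hxs).takeUntil v hvd = qT :=
            (hT.existsUnique_path x v).unique hmpath hqTpath
          have hpdec : ((p.takeUntil x hxs).append
              (((p.dropUntil x hxs).takeUntil v hvd).append
                ((p.dropUntil x hxs).dropUntil v hvd))).IsPath := by
            rw [Walk.take_spec, Walk.take_spec]
            exact hp
          have he1m : s(x, y1) ∈ ((p.dropUntil x hxs).takeUntil v hvd).edges := by
            rw [hmeq, hqT_def, Walk.edges_transfer]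
            exact he1q
          have he2m : s(v, y2) ∈ ((p.dropUntil x hxs).takeUntil v hvd).edges := by
            rw [hmeq, hqT_def, Walk.edges_transfer]
            exact he2q
          exact rainbow_aux hle hTe hP hadj.symm (Sym2.eq_swap) hpdec he1m he2m
        · -- v before x
          have hvt : v ∈ (p.takeUntil x hxs).support := by
            have hv' := hvs
            rw [← Walk.take_spec p hxs, Walk.mem_support_append_iff] at hv'
            tauto
          have hmpath : ((p.takeUntil x hxs).dropUntil v hvt).IsPath :=
            (hp.takeUntil hxs).dropUntil hvt
          have hmeq : ((p.takeUntil x hxs).dropUntil v hvt).reverse = qT :=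
            (hT.existsUnique_path x v).unique hmpath.reverse hqTpath
          have hpdec : (((p.takeUntil x hxs).takeUntil v hvt).append
              ((((p.takeUntil x hxs).dropUntil v hvt)).append
                (p.dropUntil x hxs))).IsPath := by
            rw [Walk.append_assoc, Walk.take_spec, Walk.take_spec]
            exact hp
          have he1m : s(x, y1) ∈ ((p.takeUntil x hxs).dropUntil v hvt).edges := by
            have hmm : s(x, y1) ∈ ((p.takeUntil x hxs).dropUntil v hvt).reverse.edges := by
              rw [hmeq, hqT_def, Walk.edges_transfer]
              exact he1q
            rwa [Walk.edges_reverse, List.mem_reverse] at hmm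
          have he2m : s(v, y2) ∈ ((p.takeUntil x hxs).dropUntil v hvt).edges := by
            have hmm : s(v, y2) ∈ ((p.takeUntil x hxs).dropUntil v hvt).reverse.edges := by
              rw [hmeq, hqT_def, Walk.edges_transfer]
              exact he2q
            rwa [Walk.edges_reverse, List.mem_reverse] at hmm
          exact rainbow_aux hle hTe hP hadj rfl hpdec he1m he2m
      · -- easy case
        refine ⟨p.transfer G' (fun f hf => edgeSet_mono hle (p.edges_subset_edgeSet hf)),
          hp.transfer _, ?_⟩
        rw [Walk.edges_transfer]
        refine List.Nodup.map_on ?_ hp.isTrail.edges_nodup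
        intro f hf g hg hfg
        have hfT : f ∈ T.edgeSet := p.edges_subset_edgeSet hf
        have hgT : g ∈ T.edgeSet := p.edges_subset_edgeSet hg
        rw [hTe] at hfT hgT
        have hfe : f ≠ e := by simpa using hfT.2
        have hge : g ≠ e := by simpa using hgT.2
        rcases hP f hfT.1 g hgT.1 hfg with h | ⟨hf3, hg3⟩
        · exact h
        · rcases hf3 with rfl | rfl | rfl
          · exact absurd rfl hfe
          · rcases hg3 with rfl | rfl | rfl
            · exact absurd rfl hge
            · rfl
            · exact absurd ⟨hf, hg⟩ hboth
          · rcases hg3 with rfl | rfl | rfl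
            · exact absurd rfl hge
            · exact absurd ⟨hg, hf⟩ hboth
            · rfl
    exact Nat.sInf_le key
end

section
/- Fix integers t ≥ 2 and s ≥ 2. Let G be the graph with vertex set the disjoint union of sets V_1, V_2, …, V_{2t}, where |V_1| = |V_2| = 2 and |V_i| = s for 3 ≤ i ≤ 2t, in which two distinct vertices are adjacent if and only if they lie in the same set V_i, or they lie in consecutive sets V_i and V_{i+1} for some 1 ≤ i ≤ 2t − 1. Then G is connected, rc(G) = 2t − 1, α(G) = t, and the diameter of G equals 2t − 1 (so rc(G) = 2α(G) − 1 = diam(G)). -/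
open SimpleGraph

/-- Example 2: sets `V_1, …, V_{2t}` with `|V_1| = |V_2| = 2` and `|V_i| = s`
for `i ≥ 3`; each `V_i` is a clique and every vertex of `V_i` is joined to
every vertex of `V_{i+1}`. Vertices are indexed zero-based: part `i : Fin (2t)`
corresponds to `V_{i+1}`. -/
def exampleTwo (t s : ℕ) :
    SimpleGraph (Σ i : Fin (2 * t), Fin (if (i : ℕ) < 2 then 2 else s)) where
  Adj x y := x ≠ y ∧
    ((x.1 : ℕ) = (y.1 : ℕ) ∨ (x.1 : ℕ) + 1 = (y.1 : ℕ) ∨ (y.1 : ℕ) + 1 = (x.1 : ℕ))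
  symm := by
    constructor
    rintro x y ⟨h1, h2⟩
    exact ⟨h1.symm, by tauto⟩
  loopless := by
    constructor
    rintro x ⟨h1, -⟩
    exact h1 rfl

/-! ### Auxiliary machinery -/

abbrev VX (t s : ℕ) := Σ i : Fin (2 * t), Fin (if (i : ℕ) < 2 then 2 else s)

lemma exampleTwo_adj {t s : ℕ} {x y : VX t s} :
    (exampleTwo t s).Adj x y ↔ x ≠ y ∧
      ((x.1 : ℕ) = (y.1 : ℕ) ∨ (x.1 : ℕ) + 1 = (y.1 : ℕ) ∨ (y.1 : ℕ) + 1 = (x.1 : ℕ)) :=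
  Iff.rfl

/-- Any walk changes the part index by at most its length. -/
lemma walk_bound {t s : ℕ} {x y : VX t s} (p : (exampleTwo t s).Walk x y) :
    (y.1 : ℕ) ≤ (x.1 : ℕ) + p.length ∧ (x.1 : ℕ) ≤ (y.1 : ℕ) + p.length := by
  induction p with
  | nil => simp
  | cons h q ih =>
    have h2 := h.2
    obtain ⟨ih1, ih2⟩ := ih
    simp only [SimpleGraph.Walk.length_cons]
    omega

/-- A canonical vertex in part `i`. -/
def vtx (t s : ℕ) (hs : 1 ≤ s) (i : ℕ) (hi : i < 2 * t) : VX t s :=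
  ⟨⟨i, hi⟩, ⟨0, by dsimp only; split <;> omega⟩⟩

@[simp] lemma vtx_fst (t s : ℕ) (hs : 1 ≤ s) (i : ℕ) (hi : i < 2 * t) :
    ((vtx t s hs i hi).1 : ℕ) = i := rfl

/-- The rainbow coloring: an edge gets the smaller of its two part indices
(capped at `2t-2`). -/
def col (t s : ℕ) (ht : 1 ≤ t) : Sym2 (VX t s) → Fin (2 * t - 1) := fun e =>
  ⟨(Sym2.lift ⟨fun x y => min (x.1 : ℕ) (y.1 : ℕ), fun x y => by simp [min_comm]⟩ e)
      ⊓ (2 * t - 2), by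
    have : (Sym2.lift ⟨fun x y => min (x.1 : ℕ) (y.1 : ℕ), fun x y => by simp [min_comm]⟩ e)
        ⊓ (2 * t - 2) ≤ 2 * t - 2 := inf_le_right
    omega⟩

lemma col_val {t s : ℕ} (ht : 1 ≤ t) (x y : VX t s) :
    (col t s ht s(x, y) : ℕ) = min (x.1 : ℕ) (y.1 : ℕ) ⊓ (2 * t - 2) := by
  simp [col]

/-- Construction of a rainbow path climbing from `u` up to `v`. -/
lemma exists_rainbow (t s : ℕ) (ht : 1 ≤ t) (hs : 1 ≤ s) :
    ∀ n : ℕ, ∀ u v : VX t s, (v.1 : ℕ) = (u.1 : ℕ) + (n + 1) →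
    ∃ p : (exampleTwo t s).Walk u v, p.IsPath ∧
      (∀ x ∈ p.support, (u.1 : ℕ) ≤ (x.1 : ℕ)) ∧
      (∀ q ∈ p.edges.map (col t s ht), (u.1 : ℕ) ≤ (q : ℕ)) ∧
      (p.edges.map (col t s ht)).Nodup ∧
      p.length = n + 1 := by
  intro n
  induction n with
  | zero =>
    intro u v hv
    have hne : u ≠ v := by
      intro h; subst h; omega
    have hadj : (exampleTwo t s).Adj u v := ⟨hne, Or.inr (Or.inl hv.symm)⟩
    refine ⟨Walk.cons hadj Walk.nil, ?_, ?_, ?_, ?_, ?_⟩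
    · exact Walk.IsPath.nil.cons (by simpa using hne)
    · intro x hx
      simp only [Walk.support_cons, Walk.support_nil, List.mem_cons, List.not_mem_nil,
        or_false] at hx
      rcases hx with rfl | rfl
      · exact le_refl _
      · omega
    · intro q hq
      simp only [Walk.edges_cons, Walk.edges_nil, List.map_cons, List.map_nil,
        List.mem_singleton] at hq
      subst hq
      have := v.1.isLt
      rw [col_val]
      omega
    · simp
    · simp
  | succ n ih =>
    intro u v hv
    have hvlt := v.1.isLt
    have h1 : (u.1 : ℕ) + 1 < 2 * t := by omega
    set a : VX t s := vtx t s hs ((u.1 : ℕ) + 1) h1 with ha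
    have haf : (a.1 : ℕ) = (u.1 : ℕ) + 1 := rfl
    have hne : u ≠ a := by
      intro h
      have := congrArg (fun z : VX t s => (z.1 : ℕ)) h
      simp [haf] at this
    have hadj : (exampleTwo t s).Adj u a := ⟨hne, Or.inr (Or.inl haf.symm)⟩
    obtain ⟨p, hp, hsup, hcol, hnd, hlen⟩ := ih a v (by rw [haf]; omega)
    refine ⟨Walk.cons hadj p, ?_, ?_, ?_, ?_, ?_⟩
    · refine hp.cons ?_
      intro hu
      have := hsup u hu
      rw [haf] at this
      omega
    · intro x hx
      simp only [Walk.support_cons, List.mem_cons] at hx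
      rcases hx with rfl | hx
      · exact le_refl _
      · have := hsup x hx
        rw [haf] at this
        omega
    · intro q hq
      simp only [Walk.edges_cons, List.map_cons, List.mem_cons] at hq
      rcases hq with rfl | hq
      · rw [col_val]; omega
      · have := hcol q hq
        rw [haf] at this
        omega
    · simp only [Walk.edges_cons, List.map_cons, List.nodup_cons]
      refine ⟨?_, hnd⟩
      intro hmem
      have h2 := hcol _ hmem
      rw [haf] at h2
      rw [col_val] at h2
      omega
    · simp [hlen]

/-- The coloring `col` makes `exampleTwo t s` rainbow connected. -/
lemma rainbow_conn (t s : ℕ) (ht : 1 ≤ t) (hs : 1 ≤ s) :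
    RainbowConnectedWith (exampleTwo t s) (col t s ht) := by
  intro u v
  by_cases huv : u = v
  · subst huv
    exact ⟨Walk.nil, by simp⟩
  rcases lt_trichotomy (u.1 : ℕ) (v.1 : ℕ) with hlt | heq | hgt
  · obtain ⟨p, hp, -, -, hnd, -⟩ :=
      exists_rainbow t s ht hs ((v.1 : ℕ) - (u.1 : ℕ) - 1) u v (by omega)
    exact ⟨p, hp, hnd⟩
  · have hadj : (exampleTwo t s).Adj u v := ⟨huv, Or.inl heq⟩
    refine ⟨Walk.cons hadj Walk.nil, Walk.IsPath.nil.cons (by simpa using huv), by simp⟩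
  · obtain ⟨p, hp, -, -, hnd, -⟩ :=
      exists_rainbow t s ht hs ((u.1 : ℕ) - (v.1 : ℕ) - 1) v u (by omega)
    refine ⟨p.reverse, hp.reverse, ?_⟩
    rw [Walk.edges_reverse, List.map_reverse, List.nodup_reverse]
    exact hnd

/-- For `t ≥ 2` and `s ≥ 2`, the graph of Example 2 is connected and satisfies
`rc(G) = 2t − 1`, `α(G) = t` and `diam(G) = 2t − 1`. -/
theorem exampleTwo_props (t s : ℕ) (ht : 2 ≤ t) (hs : 2 ≤ s) :
    (exampleTwo t s).Connected ∧
    rc (exampleTwo t s) = 2 * t - 1 ∧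
    _root_.indepNum (exampleTwo t s) = t ∧
    (exampleTwo t s).diam = 2 * t - 1 := by
  have ht1 : 1 ≤ t := by omega
  have hs1 : 1 ≤ s := by omega
  have hrb := rainbow_conn t s ht1 hs1
  -- connectivity
  have hconn : (exampleTwo t s).Connected := by
    rw [connected_iff]
    refine ⟨fun u v => ?_, ⟨vtx t s hs1 0 (by omega)⟩⟩
    obtain ⟨p, -, -⟩ := hrb u v
    exact ⟨p⟩
  refine ⟨hconn, ?_, ?_, ?_⟩
  -- rc
  · have hmem : (2 * t - 1) ∈ {k | ∃ c : Sym2 (VX t s) → Fin k,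
        RainbowConnectedWith (exampleTwo t s) c} := ⟨col t s ht1, hrb⟩
    have hlb : ∀ k ∈ {k | ∃ c : Sym2 (VX t s) → Fin k,
        RainbowConnectedWith (exampleTwo t s) c}, 2 * t - 1 ≤ k := by
      rintro k ⟨c, hc⟩
      obtain ⟨p, hp, hnd⟩ := hc (vtx t s hs1 0 (by omega)) (vtx t s hs1 (2 * t - 1) (by omega))
      have hb := (walk_bound p).1
      simp only [vtx_fst] at hb
      have hlen : (p.edges.map c).length ≤ k := by
        have := hnd.length_le_card
        simpa using this
      rw [List.length_map, Walk.length_edges] at hlen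
      omega
    exact le_antisymm (Nat.sInf_le hmem) (hlb _ (Nat.sInf_mem ⟨_, hmem⟩))
  -- independence number
  · have hmem : t ∈ {n | ∃ fs : Finset (VX t s), fs.card = n ∧
        (↑fs : Set (VX t s)).Pairwise fun a b => ¬ (exampleTwo t s).Adj a b} := by
      refine ⟨Finset.univ.image (fun i : Fin t =>
        vtx t s hs1 (2 * (i : ℕ)) (by omega)), ?_, ?_⟩
      · rw [Finset.card_image_of_injective _ ?_, Finset.card_univ, Fintype.card_fin]
        intro i j hij
        have := congrArg (fun z : VX t s => (z.1 : ℕ)) hij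
        simp only [vtx_fst] at this
        exact Fin.ext (by omega)
      · intro x hx y hy hxy hadj
        simp only [Finset.coe_image, Set.mem_image, Finset.mem_coe, Finset.mem_univ] at hx hy
        obtain ⟨i, -, rfl⟩ := hx
        obtain ⟨j, -, rfl⟩ := hy
        obtain ⟨-, hrel⟩ := hadj
        simp only [vtx_fst] at hrel
        have hij : i ≠ j := fun h => hxy (by rw [h])
        have : (i : ℕ) ≠ (j : ℕ) := fun h => hij (Fin.ext h)
        omega
    have hub : ∀ n ∈ {n | ∃ fs : Finset (VX t s), fs.card = n ∧
        (↑fs : Set (VX t s)).Pairwise fun a b => ¬ (exampleTwo t s).Adj a b}, n ≤ t := by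
      rintro n ⟨fs, rfl, hpw⟩
      have hinj : Set.InjOn (fun x : VX t s => (x.1 : ℕ) / 2) ↑fs := by
        intro x hx y hy hf
        by_contra hne
        have h1 : ¬ (exampleTwo t s).Adj x y := hpw hx hy hne
        rw [exampleTwo_adj] at h1
        push_neg at h1
        have h2 := h1 hne
        dsimp only at hf
        omega
      calc fs.card = (fs.image (fun x : VX t s => (x.1 : ℕ) / 2)).card :=
            (Finset.card_image_of_injOn hinj).symm
        _ ≤ (Finset.range t).card := by
            apply Finset.card_le_card
            intro m hm
            simp only [Finset.mem_image] at hm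
            obtain ⟨x, -, rfl⟩ := hm
            simp only [Finset.mem_range]
            have := x.1.isLt
            omega
        _ = t := Finset.card_range t
    exact le_antisymm (csSup_le ⟨t, hmem⟩ hub) (le_csSup ⟨t, hub⟩ hmem)
  -- diameter
  · have hub : ∀ u v : VX t s, (exampleTwo t s).edist u v ≤ ((2 * t - 1 : ℕ) : ℕ∞) := by
      have key : ∀ u v : VX t s, (u.1 : ℕ) < (v.1 : ℕ) →
          (exampleTwo t s).edist u v ≤ ((2 * t - 1 : ℕ) : ℕ∞) := by
        intro u v hlt
        obtain ⟨p, -, -, -, -, hlen⟩ :=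
          exists_rainbow t s ht1 hs1 ((v.1 : ℕ) - (u.1 : ℕ) - 1) u v (by omega)
        refine le_trans (edist_le p) ?_
        rw [hlen]
        have := v.1.isLt
        exact_mod_cast Nat.cast_le.mpr (by omega : (v.1 : ℕ) - (u.1 : ℕ) - 1 + 1 ≤ 2 * t - 1)
      intro u v
      by_cases huv : u = v
      · subst huv; simp
      rcases lt_trichotomy (u.1 : ℕ) (v.1 : ℕ) with hlt | heq | hgt
      · exact key u v hlt
      · have hadj : (exampleTwo t s).Adj u v := ⟨huv, Or.inl heq⟩
        rw [edist_eq_one_iff_adj.mpr hadj]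
        exact_mod_cast Nat.one_le_cast.mpr (by omega : 1 ≤ 2 * t - 1)
      · rw [SimpleGraph.edist_comm]; exact key v u hgt
    have hlbd : ((2 * t - 1 : ℕ) : ℕ∞) ≤
        (exampleTwo t s).edist (vtx t s hs1 0 (by omega)) (vtx t s hs1 (2 * t - 1) (by omega)) := by
      have hr : (exampleTwo t s).Reachable (vtx t s hs1 0 (by omega))
          (vtx t s hs1 (2 * t - 1) (by omega)) := hconn.preconnected _ _
      obtain ⟨p, hp⟩ := hr.exists_walk_length_eq_edist
      rw [← hp]
      have hb := (walk_bound p).1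
      simp only [vtx_fst] at hb
      exact_mod_cast Nat.cast_le.mpr (by omega : 2 * t - 1 ≤ p.length)
    have hediam : (exampleTwo t s).ediam = ((2 * t - 1 : ℕ) : ℕ∞) :=
      le_antisymm (ediam_le_of_edist_le hub) (le_trans hlbd edist_le_ediam)
    rw [SimpleGraph.diam, hediam, ENat.toNat_coe]
end

section
/- Fix integers t ≥ 2 and s ≥ 1. Let G be the graph constructed as follows: take a path P_{2t} = v_1 v_2 ⋯ v_{2t} on 2t vertices, and take t pairwise disjoint complete graphs G_1, G_2, …, G_t (also disjoint from the path) with |G_1| = 2 and |G_i| = s for 2 ≤ i ≤ t; for each 1 ≤ i ≤ t, join every vertex of G_i to both v_{2i−1} and v_{2i}. Then G is connected, rc(G) = 2t − 1, α(G) = t, and the diameter of G equals 2t − 1 (so rc(G) = 2α(G) − 1 = diam(G)). -/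
open SimpleGraph

/-- Example 1: a path `v_1 v_2 ⋯ v_{2t}` (here indexed zero-based by
`Fin (2t)`, so `v_{j+1}` is `j : Fin (2t)`) together with `t` disjoint
complete graphs `G_1, …, G_t` (indexed zero-based by `i : Fin t`, so `G_{i+1}`
has vertex set `Fin (if (i : ℕ) = 0 then 2 else s)`, of size 2 for `G_1` and
`s` otherwise); every vertex of `G_{i+1}` is joined to `v_{2i+1}` and
`v_{2i+2}`, i.e. to the path vertices with zero-based indices `2i` and
`2i + 1`. -/
def exampleOne (t s : ℕ) :
    SimpleGraph (Fin (2 * t) ⊕ Σ i : Fin t, Fin (if (i : ℕ) = 0 then 2 else s)) where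
  Adj x y :=
    match x, y with
    | Sum.inl a, Sum.inl b => (a : ℕ) + 1 = (b : ℕ) ∨ (b : ℕ) + 1 = (a : ℕ)
    | Sum.inl a, Sum.inr p => (a : ℕ) = 2 * (p.1 : ℕ) ∨ (a : ℕ) = 2 * (p.1 : ℕ) + 1
    | Sum.inr p, Sum.inl a => (a : ℕ) = 2 * (p.1 : ℕ) ∨ (a : ℕ) = 2 * (p.1 : ℕ) + 1
    | Sum.inr p, Sum.inr q => p ≠ q ∧ p.1 = q.1
  symm := by
    constructor
    rintro (a | p) (b | q) h
    · exact h.symm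
    · exact h
    · exact h
    · exact ⟨h.1.symm, h.2.symm⟩
  loopless := by
    constructor
    rintro (a | p) h
    · omega
    · exact h.1 rfl

abbrev VV (t s : ℕ) := Fin (2 * t) ⊕ Σ i : Fin t, Fin (if (i : ℕ) = 0 then 2 else s)

lemma adj_ll {t s} {a b : Fin (2*t)} : (exampleOne t s).Adj (Sum.inl a) (Sum.inl b) ↔
    ((a : ℕ) + 1 = (b : ℕ) ∨ (b : ℕ) + 1 = (a : ℕ)) := Iff.rfl
lemma adj_lr {t s a p} : (exampleOne t s).Adj (Sum.inl a) (Sum.inr p) ↔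
    ((a : ℕ) = 2 * (p.1 : ℕ) ∨ (a : ℕ) = 2 * (p.1 : ℕ) + 1) := Iff.rfl
lemma adj_rl {t s a p} : (exampleOne t s).Adj (Sum.inr p) (Sum.inl a) ↔
    ((a : ℕ) = 2 * (p.1 : ℕ) ∨ (a : ℕ) = 2 * (p.1 : ℕ) + 1) := Iff.rfl
lemma adj_rr {t s p q} : (exampleOne t s).Adj (Sum.inr p) (Sum.inr q) ↔ (p ≠ q ∧ p.1 = q.1) := Iff.rfl

def pw (t s : ℕ) : (a k : ℕ) → (h : a + k < 2 * t) →
    (exampleOne t s).Walk (Sum.inl ⟨a, by omega⟩) (Sum.inl ⟨a + k, h⟩)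
  | _, 0, _ => Walk.nil
  | a, k+1, h => (pw t s a k (by omega)).concat (adj_ll.mpr (Or.inl rfl))

lemma pw_support (t s a k : ℕ) (h : a + k < 2 * t) :
    ∀ x ∈ (pw t s a k h).support, ∃ u : Fin (2 * t),
      x = Sum.inl u ∧ a ≤ (u : ℕ) ∧ (u : ℕ) ≤ a + k := by
  induction k with
  | zero =>
    intro x hx
    simp [pw] at hx
    exact ⟨⟨a, by omega⟩, by simp [hx]⟩
  | succ k ih =>
    intro x hx
    rw [pw, Walk.support_concat, List.mem_append] at hx
    rcases hx with hx | hx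
    · obtain ⟨u, hu1, hu2, hu3⟩ := ih (by omega) x hx
      exact ⟨u, hu1, hu2, by omega⟩
    · simp at hx
      exact ⟨⟨a + (k+1), by omega⟩, by simp [hx]⟩

lemma pw_isPath (t s a k : ℕ) (h : a + k < 2 * t) : (pw t s a k h).IsPath := by
  induction k with
  | zero => simp [pw]
  | succ k ih =>
    rw [pw, Walk.isPath_def, Walk.support_concat, List.nodup_append]
    refine ⟨(Walk.isPath_def _).mp (ih (by omega)), List.nodup_singleton _, ?_⟩
    rintro x hx _ hx' rfl
    simp at hx'
    obtain ⟨u, hu1, hu2, hu3⟩ := pw_support t s a k (by omega) x hx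
    rw [hu1] at hx'
    have := congrArg (fun z => match z with | Sum.inl w => (w:ℕ) | Sum.inr _ => 0) hx'
    simp at this
    omega

def spokeCol (t : ℕ) (ht : 2 ≤ t) (i : Fin t) (a : ℕ) : Fin (2 * t - 1) :=
  if a = 2 * (i : ℕ) then ⟨2 * (i : ℕ), by have := i.2; omega⟩
  else if (i : ℕ) = 0 then ⟨0, by omega⟩ else ⟨2 * (i : ℕ) - 1, by have := i.2; omega⟩

def cfun (t s : ℕ) (ht : 2 ≤ t) : VV t s → VV t s → Fin (2 * t - 1)
  | Sum.inl a, Sum.inl b => ⟨min (a : ℕ) (b : ℕ) % (2 * t - 1), Nat.mod_lt _ (by omega)⟩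
  | Sum.inl a, Sum.inr p => spokeCol t ht p.1 a
  | Sum.inr p, Sum.inl a => spokeCol t ht p.1 a
  | Sum.inr _, Sum.inr _ => ⟨0, by omega⟩

def colc (t s : ℕ) (ht : 2 ≤ t) : Sym2 (VV t s) → Fin (2 * t - 1) :=
  Sym2.lift ⟨cfun t s ht, by
    rintro (a | p) (b | q) <;> simp [cfun, Nat.min_comm]⟩

lemma colc_mk (t s : ℕ) (ht : 2 ≤ t) (x y : VV t s) :
    colc t s ht s(x, y) = cfun t s ht x y := Sym2.lift_mk ..

lemma pw_colors (t s : ℕ) (ht : 2 ≤ t) (a k : ℕ) (h : a + k < 2 * t) :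
    (((pw t s a k h).edges.map (colc t s ht)).map Fin.val) = List.range' a k := by
  induction k with
  | zero => simp [pw]
  | succ k ih =>
    rw [pw, Walk.edges_concat, List.concat_eq_append, List.map_append, List.map_append,
      ih (by omega)]
    have hr : List.range' a (k+1) = List.range' a k ++ [a + 1 * k] := List.range'_concat ..
    rw [hr]
    congr 1
    simp only [List.map_cons, List.map_nil, colc_mk, cfun, one_mul]
    congr 1
    have : (a + k) ⊓ (a + (k + 1)) = a + k := by omega
    rw [this, Nat.mod_eq_of_lt (by omega)]

lemma isPath_concat' {V} {G : SimpleGraph V} {u v w} (p : G.Walk u v) (h : G.Adj v w)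
    (hp : p.IsPath) (hw : w ∉ p.support) : (p.concat h).IsPath := by
  rw [Walk.isPath_def, Walk.support_concat, List.nodup_append]
  refine ⟨(Walk.isPath_def _).mp hp, List.nodup_singleton _, ?_⟩
  rintro x hx _ hx' rfl
  simp at hx'
  subst hx'
  exact hw hx

lemma spokeCol_even (t : ℕ) (ht : 2 ≤ t) (i : Fin t) :
    ((spokeCol t ht i (2 * (i : ℕ))) : ℕ) = 2 * (i : ℕ) := by
  simp [spokeCol]

lemma spokeCol_odd_le (t : ℕ) (ht : 2 ≤ t) (i : Fin t) :
    ((spokeCol t ht i (2 * (i : ℕ) + 1)) : ℕ) ≤ 2 * (i : ℕ) := by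
  rw [spokeCol, if_neg (by omega)]
  split <;> simp <;> omega

section Master

variable (t s : ℕ) (ht : 2 ≤ t)

def RB (u v : VV t s) : Prop :=
  ∃ p : (exampleOne t s).Walk u v, p.IsPath ∧ ((p.edges.map (colc t s ht)).Nodup)

lemma RB_flip {u v} : RB t s ht u v → RB t s ht v u := by
  rintro ⟨p, h1, h2⟩
  exact ⟨p.reverse, h1.reverse, by
    rw [Walk.edges_reverse, List.map_reverse]; exact List.nodup_reverse.mpr h2⟩

lemma RB_ll {a b : Fin (2 * t)} (hab : (a : ℕ) ≤ (b : ℕ)) :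
    RB t s ht (Sum.inl a) (Sum.inl b) := by
  have h : (a : ℕ) + ((b : ℕ) - (a : ℕ)) < 2 * t := by have := b.2; omega
  refine ⟨(pw t s a ((b : ℕ) - (a : ℕ)) h).copy rfl
    (by congr 1; exact Fin.val_injective (by simp; omega)), ?_, ?_⟩
  · simpa using pw_isPath t s a _ h
  · apply List.Nodup.of_map Fin.val
    rw [Walk.edges_copy, pw_colors t s ht]
    exact List.nodup_range' ..

lemma RB_lr_le {a : Fin (2 * t)} {Q : Σ i : Fin t, Fin (if (i : ℕ) = 0 then 2 else s)}
    (haQ : (a : ℕ) ≤ 2 * (Q.1 : ℕ)) : RB t s ht (Sum.inl a) (Sum.inr Q) := by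
  have hi := Q.1.2
  have h : (a : ℕ) + (2 * (Q.1 : ℕ) - (a : ℕ)) < 2 * t := by omega
  set mid := (pw t s a (2 * (Q.1 : ℕ) - (a : ℕ)) h).copy rfl
    (show (Sum.inl ⟨(a : ℕ) + (2 * (Q.1 : ℕ) - (a : ℕ)), h⟩ : VV t s)
        = Sum.inl ⟨2 * (Q.1 : ℕ), by omega⟩ by
      congr 1; exact Fin.val_injective (by simp; omega)) with hmid
  have hsup : ∀ x ∈ mid.support, ∃ u : Fin (2 * t), x = Sum.inl u := by
    intro x hx
    rw [hmid, Walk.support_copy] at hx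
    obtain ⟨u, hu, _⟩ := pw_support t s a _ h x hx
    exact ⟨u, hu⟩
  refine ⟨mid.concat (adj_lr.mpr (Or.inl rfl)), ?_, ?_⟩
  · refine isPath_concat' _ _ (by simpa [hmid] using pw_isPath t s a _ h) ?_
    intro hx
    obtain ⟨u, hu⟩ := hsup _ hx
    exact (by simp at hu : False)
  · apply List.Nodup.of_map Fin.val
    rw [Walk.edges_concat, List.concat_eq_append, List.map_append, List.map_append,
      hmid, Walk.edges_copy, pw_colors t s ht]
    simp only [List.map_cons, List.map_nil, colc_mk, cfun]
    rw [List.nodup_append]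
    refine ⟨List.nodup_range' .., List.nodup_singleton _, ?_⟩
    rintro x hx _ hx' rfl
    simp at hx'
    rw [List.mem_range'_1] at hx
    rw [hx'] at hx
    rw [spokeCol_even] at hx
    omega

lemma RB_rl_ge {Q : Σ i : Fin t, Fin (if (i : ℕ) = 0 then 2 else s)} {a : Fin (2 * t)}
    (haQ : 2 * (Q.1 : ℕ) + 1 ≤ (a : ℕ)) : RB t s ht (Sum.inr Q) (Sum.inl a) := by
  have hi := Q.1.2
  have h : (2 * (Q.1 : ℕ) + 1) + ((a : ℕ) - (2 * (Q.1 : ℕ) + 1)) < 2 * t := by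
    have := a.2; omega
  set mid := (pw t s (2 * (Q.1 : ℕ) + 1) ((a : ℕ) - (2 * (Q.1 : ℕ) + 1)) h).copy rfl
    (show (Sum.inl ⟨(2 * (Q.1 : ℕ) + 1) + ((a : ℕ) - (2 * (Q.1 : ℕ) + 1)), h⟩ : VV t s)
        = Sum.inl a by
      congr 1; exact Fin.val_injective (by simp; omega)) with hmid
  refine ⟨Walk.cons (adj_rl.mpr (Or.inr rfl)) mid, ?_, ?_⟩
  · refine Walk.IsPath.cons (by simpa [hmid] using pw_isPath t s _ _ h) ?_
    intro hx
    rw [hmid, Walk.support_copy] at hx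
    obtain ⟨u, hu, _⟩ := pw_support t s _ _ h _ hx
    exact (by simp at hu : False)
  · apply List.Nodup.of_map Fin.val
    rw [Walk.edges_cons, List.map_cons, List.map_cons, colc_mk,
      hmid, Walk.edges_copy, pw_colors t s ht]
    rw [List.nodup_cons]
    refine ⟨?_, List.nodup_range' ..⟩
    intro hx
    rw [List.mem_range'_1] at hx
    have := spokeCol_odd_le t ht Q.1
    simp only [cfun] at hx
    omega

end Master

section Master2

variable (t s : ℕ) (ht : 2 ≤ t)

lemma RB_rr_lt {P Q : Σ i : Fin t, Fin (if (i : ℕ) = 0 then 2 else s)}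
    (hPQ : (P.1 : ℕ) < (Q.1 : ℕ)) : RB t s ht (Sum.inr P) (Sum.inr Q) := by
  have hi := P.1.2
  have hj := Q.1.2
  have h : (2 * (P.1 : ℕ) + 1) + (2 * (Q.1 : ℕ) - (2 * (P.1 : ℕ) + 1)) < 2 * t := by omega
  set mid := (pw t s (2 * (P.1 : ℕ) + 1) (2 * (Q.1 : ℕ) - (2 * (P.1 : ℕ) + 1)) h).copy rfl
    (show (Sum.inl ⟨(2 * (P.1 : ℕ) + 1) + (2 * (Q.1 : ℕ) - (2 * (P.1 : ℕ) + 1)), h⟩ : VV t s)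
        = Sum.inl ⟨2 * (Q.1 : ℕ), by omega⟩ by
      congr 1; exact Fin.val_injective (by simp; omega)) with hmid
  have hsup : ∀ x ∈ mid.support, ∃ u : Fin (2 * t),
      x = Sum.inl u ∧ 2 * (P.1 : ℕ) + 1 ≤ (u : ℕ) ∧ (u : ℕ) ≤ 2 * (Q.1 : ℕ) := by
    intro x hx
    rw [hmid, Walk.support_copy] at hx
    obtain ⟨u, hu, hu2, hu3⟩ := pw_support t s _ _ h x hx
    exact ⟨u, hu, hu2, by omega⟩
  have hPQ' : Sum.inr (α := Fin (2*t)) P ≠ Sum.inr Q := by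
    intro hc
    injection hc with hc
    exact absurd (congrArg (fun z => ((Sigma.fst z : Fin t) : ℕ)) hc) (by omega)
  refine ⟨Walk.cons (adj_rl.mpr (Or.inr rfl))
    (mid.concat (adj_lr.mpr (Or.inl rfl))), ?_, ?_⟩
  · refine Walk.IsPath.cons (isPath_concat' _ _ (by simpa [hmid] using pw_isPath t s _ _ h) ?_) ?_
    · intro hx
      obtain ⟨u, hu, _⟩ := hsup _ hx
      exact (by simp at hu : False)
    · rw [Walk.support_concat, List.mem_append]
      rintro (hx | hx)
      · obtain ⟨u, hu, _⟩ := hsup _ hx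
        exact (by simp at hu : False)
      · simp at hx
        exact hPQ' (by rw [hx])
  · apply List.Nodup.of_map Fin.val
    rw [Walk.edges_cons, Walk.edges_concat, List.concat_eq_append, List.map_cons,
      List.map_append, List.map_cons, List.map_cons, List.map_append, List.map_cons,
      colc_mk, colc_mk, hmid, Walk.edges_copy, pw_colors t s ht]
    simp only [cfun, List.map_nil]
    rw [List.nodup_cons, List.nodup_append]
    have hodd := spokeCol_odd_le t ht P.1
    refine ⟨?_, List.nodup_range' .., List.nodup_singleton _, ?_⟩
    · rw [List.mem_append, List.mem_range'_1]
      rintro (hx | hx)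
      · omega
      · simp [spokeCol_even] at hx
        omega
    · rintro x hx _ hx' rfl
      simp [spokeCol_even] at hx'
      rw [List.mem_range'_1] at hx
      omega

lemma master (u v : VV t s) : RB t s ht u v := by
  rcases u with a | P <;> rcases v with b | Q
  · rcases le_total (a : ℕ) (b : ℕ) with h | h
    · exact RB_ll t s ht h
    · exact RB_flip t s ht (RB_ll t s ht h)
  · rcases le_or_gt (a : ℕ) (2 * (Q.1 : ℕ)) with h | h
    · exact RB_lr_le t s ht h
    · exact RB_flip t s ht (RB_rl_ge t s ht h)
  · rcases le_or_gt (b : ℕ) (2 * (P.1 : ℕ)) with h | h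
    · exact RB_flip t s ht (RB_lr_le t s ht h)
    · exact RB_rl_ge t s ht h
  · rcases lt_trichotomy (P.1 : ℕ) (Q.1 : ℕ) with h | h | h
    · exact RB_rr_lt t s ht h
    · by_cases hpq : P = Q
      · subst hpq
        exact ⟨Walk.nil, by simp, by simp⟩
      · refine ⟨Walk.cons (adj_rr.mpr ⟨hpq, Fin.val_injective h⟩) Walk.nil, ?_, by simp⟩
        rw [Walk.isPath_def]
        simp only [Walk.support_cons, Walk.support_nil, List.nodup_cons, List.mem_singleton,
          List.nodup_singleton, and_true, List.not_mem_nil, not_false_iff, List.nodup_nil]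
        intro hc
        injection hc with hc
        exact hpq hc
    · exact RB_flip t s ht (RB_rr_lt t s ht h)

end Master2

def pot (t s : ℕ) : VV t s → ℕ
  | Sum.inl a => (a : ℕ)
  | Sum.inr P => 2 * (P.1 : ℕ)

lemma pot_adj (t s : ℕ) {u v : VV t s} (h : (exampleOne t s).Adj u v) :
    pot t s u ≤ pot t s v + 1 ∧ pot t s v ≤ pot t s u + 1 := by
  rcases u with a | P <;> rcases v with b | Q
  · rw [adj_ll] at h; simp only [pot]; omega
  · rw [adj_lr] at h; simp only [pot]; omega
  · rw [adj_rl] at h; simp only [pot]; omega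
  · rcases h with ⟨-, h2⟩; simp only [pot, h2]; omega

lemma pot_walk (t s : ℕ) {u v : VV t s} (p : (exampleOne t s).Walk u v) :
    pot t s u ≤ pot t s v + p.length ∧ pot t s v ≤ pot t s u + p.length := by
  induction p with
  | nil => simp
  | cons h p ih =>
    have hd := pot_adj t s h
    rw [Walk.length_cons]
    omega

lemma rb_length_le {V : Type*} {G : SimpleGraph V} {k : ℕ} {c : Sym2 V → Fin k} {u v : V}
    (p : G.Walk u v) (h : (p.edges.map c).Nodup) : p.length ≤ k := by
  have h2 := h.length_le_card
  simpa [Walk.length_edges] using h2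

lemma rc_lb (t s : ℕ) (ht : 2 ≤ t) {k : ℕ} (c : Sym2 (VV t s) → Fin k)
    (h : RainbowConnectedWith (exampleOne t s) c) : 2 * t - 1 ≤ k := by
  obtain ⟨p, hp, hnd⟩ := h (Sum.inl ⟨0, by omega⟩) (Sum.inl ⟨2 * t - 1, by omega⟩)
  have h1 := (pot_walk t s p).2
  have h2 := rb_length_le p hnd
  simp only [pot] at h1
  omega

def gmap (t s : ℕ) : VV t s → Fin t
  | Sum.inl a => ⟨(a : ℕ) / 2, by have := a.2; omega⟩
  | Sum.inr P => P.1

lemma gmap_adj (t s : ℕ) (x y : VV t s) (hxy : x ≠ y) (hg : gmap t s x = gmap t s y) :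
    (exampleOne t s).Adj x y := by
  rcases x with a | P <;> rcases y with b | Q
  · rw [adj_ll]
    have hab : (a : ℕ) ≠ (b : ℕ) := fun hc => hxy (by rw [Fin.val_injective hc])
    have := congrArg Fin.val hg
    simp only [gmap] at this
    omega
  · rw [adj_lr]
    have := congrArg Fin.val hg
    simp only [gmap] at this
    omega
  · rw [adj_rl]
    have := congrArg Fin.val hg
    simp only [gmap] at this
    omega
  · rw [adj_rr]
    simp only [gmap] at hg
    exact ⟨fun hc => hxy (by rw [hc]), hg⟩

lemma indep_card_le (t s : ℕ) (F : Finset (VV t s))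
    (hpw : (↑F : Set (VV t s)).Pairwise fun a b => ¬ (exampleOne t s).Adj a b) :
    F.card ≤ t := by
  have : F.card ≤ (Finset.univ : Finset (Fin t)).card := by
    apply Finset.card_le_card_of_injOn (gmap t s) (fun a _ => Finset.mem_univ _)
    intro x hx y hy hg
    by_contra hne
    exact hpw (by simpa using hx) (by simpa using hy) hne (gmap_adj t s x y hne hg)
  simpa using this


/-- For `t ≥ 2` and `s ≥ 1`, the graph of Example 1 is connected and satisfies
`rc(G) = 2t − 1`, `α(G) = t` and `diam(G) = 2t − 1`. -/
theorem exampleOne_props (t s : ℕ) (ht : 2 ≤ t) (hs : 1 ≤ s) :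
    (exampleOne t s).Connected ∧
    rc (exampleOne t s) = 2 * t - 1 ∧
    _root_.indepNum (exampleOne t s) = t ∧
    (exampleOne t s).diam = 2 * t - 1 := by
  haveI hne : Nonempty (VV t s) := ⟨Sum.inl ⟨0, by omega⟩⟩
  have hconn : (exampleOne t s).Connected := by
    rw [connected_iff]
    refine ⟨fun u v => ?_, hne⟩
    obtain ⟨p, -, -⟩ := master t s ht u v
    exact ⟨p⟩
  have hrcw : RainbowConnectedWith (exampleOne t s) (colc t s ht) :=
    fun u v => master t s ht u v
  have hmem : (2 * t - 1) ∈
      {k | ∃ c : Sym2 (VV t s) → Fin k, RainbowConnectedWith (exampleOne t s) c} :=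
    ⟨colc t s ht, hrcw⟩
  refine ⟨hconn, ?_, ?_, ?_⟩
  · apply le_antisymm
    · exact Nat.sInf_le hmem
    · apply le_csInf ⟨_, hmem⟩
      rintro k ⟨c, hc⟩
      exact rc_lb t s ht c hc
  · -- independence number
    have hub : ∀ n ∈ {n | ∃ F : Finset (VV t s), F.card = n ∧
        (↑F : Set (VV t s)).Pairwise fun a b => ¬ (exampleOne t s).Adj a b}, n ≤ t := by
      rintro n ⟨F, rfl, hpw⟩
      exact indep_card_le t s F hpw
    have hwit : t ∈ {n | ∃ F : Finset (VV t s), F.card = n ∧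
        (↑F : Set (VV t s)).Pairwise fun a b => ¬ (exampleOne t s).Adj a b} := by
      refine ⟨Finset.univ.image (fun i : Fin t =>
        (Sum.inr ⟨i, ⟨0, by split <;> omega⟩⟩ : VV t s)), ?_, ?_⟩
      · rw [Finset.card_image_of_injective _ ?_, Finset.card_univ, Fintype.card_fin]
        intro i j hij
        injection hij with hij
        exact (congrArg Sigma.fst hij)
      · intro x hx y hy hxy
        simp only [Finset.coe_image, Set.mem_image] at hx hy
        obtain ⟨i, -, rfl⟩ := hx
        obtain ⟨j, -, rfl⟩ := hy
        rw [adj_rr]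
        rintro ⟨-, h2⟩
        simp only at h2
        exact hxy (by rw [h2])
    apply le_antisymm
    · exact csSup_le ⟨t, hwit⟩ hub
    · exact le_csSup ⟨t, hub⟩ hwit
  · -- diameter
    have hdistle : ∀ u v : VV t s, (exampleOne t s).dist u v ≤ 2 * t - 1 := by
      intro u v
      obtain ⟨p, -, hnd⟩ := master t s ht u v
      exact le_trans (dist_le p) (rb_length_le p hnd)
    have hedle : (exampleOne t s).ediam ≤ (2 * t - 1 : ℕ) := by
      apply ediam_le_of_edist_le
      intro u v
      obtain ⟨p, -, hnd⟩ := master t s ht u v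
      exact le_trans (edist_le p) (Nat.cast_le.mpr (rb_length_le p hnd))
    have hnetop : (exampleOne t s).ediam ≠ ⊤ :=
      fun hc => by rw [hc] at hedle; exact (ENat.coe_ne_top _) (top_le_iff.mp hedle)
    have hlow : 2 * t - 1 ≤ (exampleOne t s).dist
        (Sum.inl ⟨0, by omega⟩) (Sum.inl ⟨2 * t - 1, by omega⟩) := by
      obtain ⟨p, hp⟩ := hconn.exists_walk_length_eq_dist
        (Sum.inl (⟨0, by omega⟩ : Fin (2*t))) (Sum.inl ⟨2 * t - 1, by omega⟩)
      have h1 := (pot_walk t s p).2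
      simp only [pot] at h1
      omega
    apply le_antisymm
    · obtain ⟨u, v, hd⟩ := exists_dist_eq_diam (G := exampleOne t s)
      rw [← hd]
      exact hdistle u v
    · exact le_trans hlow (dist_le_diam hnetop)
end
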